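/- arXiv:2502.18797 — 5 statements merged into one kernel-verified Lean document; each statement's English description precedes it below -/
import Mathlib

section
/- Let G be a connected plane graph with minimum degree at least 3 that contains no cycle of length 4, no cycle of length 7, no cycle of length 9, and no 5-cycle normally adjacent to a 3-cycle. Then the boundary walk of every 6-face of G consists either of a single 6-cycle or of two 3-cycles (meeting at a cut vertex). -/
namespace Paper

open SimpleGraph

variable {V : Type*}

/-- The fixed-point-free involution on darts reversing each dart. -/
def dartFlip (G : SimpleGraph V) : Equiv.Perm G.Dart :=
  ⟨SimpleGraph.Dart.symm, SimpleGraph.Dart.symm,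
    fun d => SimpleGraph.Dart.symm_symm d, fun d => SimpleGraph.Dart.symm_symm d⟩

/-- A combinatorial embedding (rotation system) of a simple graph: a permutation of the
darts whose cycles are exactly the sets of darts emanating from a common vertex. -/
structure PlaneEmbedding (G : SimpleGraph V) where
  rot : Equiv.Perm G.Dart
  fst_rot : ∀ d : G.Dart, (rot d).fst = d.fst
  rot_cyclic : ∀ d e : G.Dart, d.fst = e.fst → rot.SameCycle d e

/-- The face permutation of a combinatorial embedding; its orbits are the (boundary walks
of the) faces of the embedding. -/
def PlaneEmbedding.facePerm {G : SimpleGraph V} (E : PlaneEmbedding G) : Equiv.Perm G.Dart :=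
  E.rot * dartFlip G

/-- The face (as its set of boundary darts, i.e. the orbit of the face permutation)
containing a given dart. -/
def faceOf {G : SimpleGraph V} (E : PlaneEmbedding G) (d : G.Dart) : Set G.Dart :=
  {e | E.facePerm.SameCycle d e}

/-- The length of the boundary walk of the face containing a given dart; a `k`-face is a
face whose boundary walk has length `k`, i.e. whose dart-orbit has size `k`. -/
noncomputable def faceSize {G : SimpleGraph V} (E : PlaneEmbedding G) (d : G.Dart) : ℕ :=
  (faceOf E d).ncard

/-- The number of faces of the embedding lying in a given connected component. -/
noncomputable def componentFaceCount {G : SimpleGraph V} (E : PlaneEmbedding G)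
    (c : G.ConnectedComponent) : ℕ :=
  Nat.card (Quotient (Setoid.comap
    (Subtype.val : {d : G.Dart // G.connectedComponentMk d.fst = c} → G.Dart)
    (Equiv.Perm.SameCycle.setoid E.facePerm)))

/-- The embedding is plane (genus zero): Euler's formula `V - E + F = 2` holds on each
connected component containing an edge (stated as `2V + 2F = #darts + 4`, using that the
number of darts is twice the number of edges). -/
def PlaneEmbedding.IsPlane {G : SimpleGraph V} (E : PlaneEmbedding G) : Prop :=
  ∀ c : G.ConnectedComponent, (∃ d : G.Dart, G.connectedComponentMk d.fst = c) →
    2 * {v : V | G.connectedComponentMk v = c}.ncard + 2 * componentFaceCount E c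
      = {d : G.Dart | G.connectedComponentMk d.fst = c}.ncard + 4

/-- `G` is a planar graph: it admits a plane (genus-zero) combinatorial embedding. -/
def IsPlanar (G : SimpleGraph V) : Prop :=
  ∃ E : PlaneEmbedding G, E.IsPlane

/-- `G` has no cycle of length `n`. -/
def NoCycleLen (G : SimpleGraph V) (n : ℕ) : Prop :=
  ∀ (v : V) (c : G.Walk v v), c.IsCycle → c.length ≠ n

/-- Two cycles (given as closed walks) are normally adjacent: their intersection is
isomorphic to `K₂`, i.e. they share exactly one edge together with its two endpoints. -/
def NormAdjWalks (G : SimpleGraph V) {a b : V} (c₁ : G.Walk a a) (c₂ : G.Walk b b) : Prop :=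
  ∃ x y : V, x ≠ y ∧ s(x, y) ∈ c₁.edges ∧ s(x, y) ∈ c₂.edges ∧
    (∀ z : V, (z ∈ c₁.support ∧ z ∈ c₂.support) ↔ (z = x ∨ z = y))

/-- `G` has no `5`-cycle normally adjacent to a `3`-cycle. -/
def No5CycleNormAdj3 (G : SimpleGraph V) : Prop :=
  ∀ (a b : V) (c₁ : G.Walk a a) (c₂ : G.Walk b b),
    c₁.IsCycle → c₁.length = 5 → c₂.IsCycle → c₂.length = 3 →
      ¬ NormAdjWalks G c₁ c₂

/-- `d` lists the boundary darts of a face in order, and this boundary is the closed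
walk `v 0, v 1, …, v (n-1), v 0`. -/
def FaceTraversal {G : SimpleGraph V} (E : PlaneEmbedding G) {n : ℕ}
    (v : ZMod n → V) (d : ZMod n → G.Dart) : Prop :=
  (∀ i, (d i).toProd = (v i, v (i + 1))) ∧ ∀ i, E.facePerm (d i) = d (i + 1)

/-- The cycle `v 0, v 1, …, v (n-1), v 0` (with distinct vertices) bounds a face of the
embedding (traversed in one of the two possible directions). -/
def CycleBoundsFace {G : SimpleGraph V} (E : PlaneEmbedding G) {n : ℕ}
    (v : ZMod n → V) : Prop :=
  Function.Injective v ∧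
    ((∃ d, FaceTraversal E v d) ∨ (∃ d, FaceTraversal E (fun i => v (-i)) d))

/-- The `i`-th vertex of the boundary walk of the face containing the dart `d0`. -/
def boundaryVert {G : SimpleGraph V} (E : PlaneEmbedding G) (d0 : G.Dart) (i : ℕ) : V :=
  ((E.facePerm ^ i) d0).fst

/-- The faces containing the darts `d1`, `d2` are adjacent: their boundaries share at
least one edge. -/
def FacesAdjacent {G : SimpleGraph V} (E : PlaneEmbedding G) (d1 d2 : G.Dart) : Prop :=
  ∃ e1 e2 : G.Dart, E.facePerm.SameCycle d1 e1 ∧ E.facePerm.SameCycle d2 e2 ∧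
    e1.edge = e2.edge

/-- The set of vertices on the boundary of the face containing the dart `d`. -/
def faceVerts {G : SimpleGraph V} (E : PlaneEmbedding G) (d : G.Dart) : Set V :=
  {x | ∃ e : G.Dart, E.facePerm.SameCycle d e ∧ e.fst = x}

/-- The set of edges on the boundary of the face containing the dart `d`. -/
def faceEdges {G : SimpleGraph V} (E : PlaneEmbedding G) (d : G.Dart) : Set (Sym2 V) :=
  {s | ∃ e : G.Dart, E.facePerm.SameCycle d e ∧ e.edge = s}

section Configs

variable [Fintype V]

/-- Configuration (1): a `10`-cycle bounding a face together with a `3`-cycle bounding a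
face, normally adjacent to it along one edge, all eleven vertices having degree `3`. -/
def Config1 (G : SimpleGraph V) [DecidableRel G.Adj] (E : PlaneEmbedding G) : Prop :=
  ∃ (v : ZMod 10 → V) (w : ZMod 3 → V) (u : V),
    CycleBoundsFace E v ∧ CycleBoundsFace E w ∧
    ({w 0, w 1, w 2} : Set V) = {v 0, v 1, u} ∧ u ∉ Set.range v ∧
    (∀ i, G.degree (v i) = 3) ∧ G.degree u = 3

/-- Configuration (2): two vertex-disjoint `10`-cycles `x₁…x₁₀` and `y₁…y₁₀` (indexed here
from `0`), each bounding a face, with edges `x₃y₃` and `x₁₀y₁₀`; all `xᵢ` have degree `3`,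
`y₃` and `y₁₀` have degree `4`, the other `yᵢ` have degree `3`. -/
def Config2 (G : SimpleGraph V) [DecidableRel G.Adj] (E : PlaneEmbedding G) : Prop :=
  ∃ x y : ZMod 10 → V,
    CycleBoundsFace E x ∧ CycleBoundsFace E y ∧
    Set.range x ∩ Set.range y = ∅ ∧
    G.Adj (x 2) (y 2) ∧ G.Adj (x 9) (y 9) ∧
    (∀ i, G.degree (x i) = 3) ∧
    G.degree (y 2) = 4 ∧ G.degree (y 9) = 4 ∧
    (∀ i, i ≠ 2 → i ≠ 9 → G.degree (y i) = 3)

/-- Configuration (3): an `8`-cycle bounding a face and a `5`-cycle bounding a face that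
are normally adjacent (sharing exactly one edge and its endpoints), all eleven vertices
having degree `3`. -/
def Config3 (G : SimpleGraph V) [DecidableRel G.Adj] (E : PlaneEmbedding G) : Prop :=
  ∃ (a : ZMod 8 → V) (b : ZMod 5 → V),
    CycleBoundsFace E a ∧ CycleBoundsFace E b ∧
    Set.range a ∩ Set.range b = {a 0, a 1} ∧
    (∃ j : ZMod 5, (b j = a 0 ∧ b (j + 1) = a 1) ∨ (b j = a 1 ∧ b (j + 1) = a 0)) ∧
    (∀ i, G.degree (a i) = 3) ∧ (∀ j, G.degree (b j) = 3)

end Configs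

open Classical in
/-- The function resulting from the operation `Delete_[u](G, f)`: every neighbour of `u`
loses one unit. -/
noncomputable def deleteFun (G : SimpleGraph V) (u : V) (f : V → ℤ) : V → ℤ :=
  fun v => if G.Adj u v then f v - 1 else f v

open Classical in
/-- The function resulting from the operation `DeleteSave_[u; w](G, f)`: every neighbour
of `u` except `w` loses one unit. -/
noncomputable def deleteSaveFun (G : SimpleGraph V) (u w : V) (f : V → ℤ) : V → ℤ :=
  fun v => if G.Adj u v ∧ v ≠ w then f v - 1 else f v

/-- All vertices of the subgraph of `G` induced on `S` can be removed by a sequence of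
legal applications of the `Delete` and `DeleteSave` operations, starting from the value
function `f`. -/
inductive WeaklyReducible (G : SimpleGraph V) : Set V → (V → ℤ) → Prop
  | empty (f : V → ℤ) : WeaklyReducible G ∅ f
  | delete (S : Set V) (f : V → ℤ) (u : V) (hu : u ∈ S)
      (hnn : ∀ v ∈ S \ {u}, 0 ≤ deleteFun G u f v)
      (h : WeaklyReducible G (S \ {u}) (deleteFun G u f)) : WeaklyReducible G S f
  | deleteSave (S : Set V) (f : V → ℤ) (u w : V) (hu : u ∈ S) (hw : w ∈ S \ {u})
      (hadj : G.Adj u w) (hlt : f w < f u)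
      (hnn : ∀ v ∈ S \ {u}, 0 ≤ deleteSaveFun G u w f v)
      (h : WeaklyReducible G (S \ {u}) (deleteSaveFun G u w f)) : WeaklyReducible G S f

/-- `G` is weakly `d`-degenerate: all its vertices can be removed by a sequence of legal
applications of the `Delete` and `DeleteSave` operations, starting from the constant
function of value `d`. -/
def WeaklyDegenerate (G : SimpleGraph V) (d : ℤ) : Prop :=
  WeaklyReducible G Set.univ (fun _ => d)

/-- The canonical cover of `G` with `s = 2`: two disjoint copies of `G`, on vertex set
`V × Fin 2`, with `(u, i)` adjacent to `(v, j)` iff `uv ∈ E(G)` and `i = j`. -/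
def canonicalCover2 (G : SimpleGraph V) : SimpleGraph (V × Fin 2) where
  Adj a b := G.Adj a.1 b.1 ∧ a.2 = b.2
  symm := ⟨fun _ _ h => ⟨h.1.symm, h.2.symm⟩⟩
  loopless := ⟨fun a h => G.loopless.irrefl a.1 h.1⟩

/-- `T` is a strictly `f`-degenerate transversal-candidate set: every nonempty subgraph
`K` of the induced subgraph `H[T]` has a vertex `x` with `deg_K x < f x`. -/
def StrictlyFDegenerateOn {W : Type*} (H : SimpleGraph W) (f : W → ℕ) (T : Set W) : Prop :=
  ∀ K : H.Subgraph, K.verts ⊆ T → K.verts.Nonempty →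
    ∃ x ∈ K.verts, Nat.card (K.neighborSet x) < f x

end Paper

open SimpleGraph

private lemma face_period_aux {V : Type*} [Fintype V] {G : SimpleGraph V} [DecidableRel G.Adj]
    (E : Paper.PlaneEmbedding G) (d0 : G.Dart) :
    Function.minimalPeriod ⇑E.facePerm d0 = Paper.faceSize E d0 := by
  classical
  set f := E.facePerm with hf
  have hper : d0 ∈ Function.periodicPts ⇑f :=
    ⟨orderOf f, orderOf_pos f, by
      simp [Function.IsPeriodicPt, Function.IsFixedPt, Equiv.Perm.iterate_eq_pow,
        pow_orderOf_eq_one]⟩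
  set n := Function.minimalPeriod ⇑f d0 with hn
  have hn0 : 0 < n := Function.minimalPeriod_pos_of_mem_periodicPts hper
  have himg : Paper.faceOf E d0 = (fun i : ℕ => (f ^ i) d0) '' Set.Iio n := by
    ext e
    constructor
    · rintro he
      obtain ⟨i, _, hie⟩ := Equiv.Perm.SameCycle.exists_pow_eq' he
      refine ⟨i % n, Set.mem_Iio.2 (Nat.mod_lt _ hn0), ?_⟩
      rw [← hie]
      have := Function.iterate_mod_minimalPeriod_eq (f := ⇑f) (x := d0) (n := i)
      simpa [Equiv.Perm.iterate_eq_pow, ← hn] using this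
    · rintro ⟨i, _, rfl⟩
      exact ⟨(i : ℤ), by simp [zpow_natCast]; rfl⟩
  have hinj : Set.InjOn (fun i : ℕ => (f ^ i) d0) (Set.Iio n) := by
    have := Function.iterate_injOn_Iio_minimalPeriod (f := ⇑f) (x := d0)
    simpa [Equiv.Perm.iterate_eq_pow, ← hn] using this
  rw [Paper.faceSize, himg, Set.ncard_image_of_injOn hinj, ← Finset.coe_range,
    Set.ncard_coe_finset, Finset.card_range]

private lemma no_backtrack_aux {V : Type*} [Fintype V] {G : SimpleGraph V} [DecidableRel G.Adj]
    (E : Paper.PlaneEmbedding G) (hmin : ∀ v : V, 3 ≤ G.degree v) (d : G.Dart) :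
    E.facePerm d ≠ d.symm := by
  intro hcon
  have h1 : E.rot d.symm = d.symm := by
    simpa [Paper.PlaneEmbedding.facePerm, Paper.dartFlip, Equiv.Perm.mul_apply] using hcon
  obtain ⟨x, hxadj, hxne⟩ : ∃ x, G.Adj d.snd x ∧ x ≠ d.fst := by
    by_contra hno
    push_neg at hno
    have hsub : G.neighborFinset d.snd ⊆ {d.fst} := by
      intro y hy
      rw [SimpleGraph.mem_neighborFinset] at hy
      simp [hno y hy]
    have h2 : G.degree d.snd ≤ 1 := by
      rw [← SimpleGraph.card_neighborFinset_eq_degree]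
      simpa using Finset.card_le_card hsub
    have := hmin d.snd
    omega
  obtain ⟨i, hi⟩ := E.rot_cyclic d.symm (⟨(d.snd, x), hxadj⟩ : G.Dart) rfl
  rw [Equiv.Perm.zpow_apply_eq_self_of_apply_eq_self h1] at hi
  exact hxne (congrArg (fun t : G.Dart => t.toProd.2) hi).symm

/-- The boundary walk of every 6-face consists of a single 6-cycle or of two
3-cycles meeting at a vertex. -/
theorem statement8 {V : Type*} [Fintype V] (G : SimpleGraph V) [DecidableRel G.Adj]
    (hconn : G.Connected)
    (E : Paper.PlaneEmbedding G) (hE : E.IsPlane)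
    (hmin : ∀ v : V, 3 ≤ G.degree v)
    (h4 : Paper.NoCycleLen G 4) (h7 : Paper.NoCycleLen G 7)
    (h9 : Paper.NoCycleLen G 9) (h53 : Paper.No5CycleNormAdj3 G) :
    ∀ d0 : G.Dart, Paper.faceSize E d0 = 6 →
      (Function.Injective fun i : Fin 6 => Paper.boundaryVert E d0 i) ∨
      (∃ k : ℕ, Paper.boundaryVert E d0 k = Paper.boundaryVert E d0 (k + 3) ∧
        [Paper.boundaryVert E d0 k, Paper.boundaryVert E d0 (k + 1),
         Paper.boundaryVert E d0 (k + 2), Paper.boundaryVert E d0 (k + 4),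
         Paper.boundaryVert E d0 (k + 5)].Nodup) := by
  intro d0 hsize
  classical
  have hn6 : Function.minimalPeriod ⇑E.facePerm d0 = 6 :=
    (face_period_aux E d0).trans hsize
  have h6 : (E.facePerm ^ 6) d0 = d0 := by
    have := Function.iterate_minimalPeriod (f := ⇑E.facePerm) (x := d0)
    rw [hn6] at this
    rw [Equiv.Perm.iterate_eq_pow] at this; exact this
  have hP : ∀ i : ℕ, Paper.boundaryVert E d0 (i + 6) = Paper.boundaryVert E d0 i := by
    intro i
    show ((E.facePerm ^ (i + 6)) d0).fst = ((E.facePerm ^ i) d0).fst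
    rw [pow_add, Equiv.Perm.mul_apply, h6]
  have hfst : ∀ i : ℕ, Paper.boundaryVert E d0 (i + 1) = ((E.facePerm ^ i) d0).snd := by
    intro i
    show ((E.facePerm ^ (i + 1)) d0).fst = ((E.facePerm ^ i) d0).snd
    rw [pow_succ', Equiv.Perm.mul_apply]
    show (E.rot (Paper.dartFlip G ((E.facePerm ^ i) d0))).fst = _
    rw [E.fst_rot]
    rfl
  have htp : ∀ i : ℕ, ((E.facePerm ^ i) d0).toProd
      = (Paper.boundaryVert E d0 i, Paper.boundaryVert E d0 (i + 1)) := by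
    intro i
    rw [hfst i]
    rfl
  have hA : ∀ i : ℕ, Paper.boundaryVert E d0 i ≠ Paper.boundaryVert E d0 (i + 1) := by
    intro i h
    rw [hfst i] at h
    exact ((E.facePerm ^ i) d0).fst_ne_snd h
  have hB : ∀ i : ℕ, Paper.boundaryVert E d0 i ≠ Paper.boundaryVert E d0 (i + 2) := by
    intro i h
    apply no_backtrack_aux E hmin ((E.facePerm ^ i) d0)
    apply SimpleGraph.Dart.ext
    have h1 : E.facePerm ((E.facePerm ^ i) d0) = (E.facePerm ^ (i + 1)) d0 := by
      rw [pow_succ', Equiv.Perm.mul_apply]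
    rw [h1, htp (i + 1), SimpleGraph.Dart.symm_toProd, htp i, Prod.swap_prod_mk,
      show i + 1 + 1 = i + 2 from rfl, h]
  have hdne : ∀ i j : ℕ, i < 6 → j < 6 → i ≠ j →
      (E.facePerm ^ i) d0 ≠ (E.facePerm ^ j) d0 := by
    intro i j hi hj hne h
    have hio := Function.iterate_injOn_Iio_minimalPeriod (f := ⇑E.facePerm) (x := d0)
    rw [hn6] at hio
    exact hne (hio (Set.mem_Iio.2 hi) (Set.mem_Iio.2 hj)
      (by simpa [Equiv.Perm.iterate_eq_pow] using h))
  have hdext : ∀ i j : ℕ, Paper.boundaryVert E d0 i = Paper.boundaryVert E d0 j →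
      Paper.boundaryVert E d0 (i + 1) = Paper.boundaryVert E d0 (j + 1) →
      (E.facePerm ^ i) d0 = (E.facePerm ^ j) d0 := by
    intro i j h1 h2
    apply SimpleGraph.Dart.ext
    rw [htp i, htp j, h1, h2]
  have n01 : Paper.boundaryVert E d0 0 ≠ Paper.boundaryVert E d0 1 := hA 0
  have n12 : Paper.boundaryVert E d0 1 ≠ Paper.boundaryVert E d0 2 := hA 1
  have n23 : Paper.boundaryVert E d0 2 ≠ Paper.boundaryVert E d0 3 := hA 2
  have n34 : Paper.boundaryVert E d0 3 ≠ Paper.boundaryVert E d0 4 := hA 3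
  have n45 : Paper.boundaryVert E d0 4 ≠ Paper.boundaryVert E d0 5 := hA 4
  have n56 : Paper.boundaryVert E d0 5 ≠ Paper.boundaryVert E d0 6 := hA 5
  have n67 : Paper.boundaryVert E d0 6 ≠ Paper.boundaryVert E d0 7 := hA 6
  have n02 : Paper.boundaryVert E d0 0 ≠ Paper.boundaryVert E d0 2 := hB 0
  have n13 : Paper.boundaryVert E d0 1 ≠ Paper.boundaryVert E d0 3 := hB 1
  have n24 : Paper.boundaryVert E d0 2 ≠ Paper.boundaryVert E d0 4 := hB 2
  have n35 : Paper.boundaryVert E d0 3 ≠ Paper.boundaryVert E d0 5 := hB 3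
  have n46 : Paper.boundaryVert E d0 4 ≠ Paper.boundaryVert E d0 6 := hB 4
  have n57 : Paper.boundaryVert E d0 5 ≠ Paper.boundaryVert E d0 7 := hB 5
  have p0 : Paper.boundaryVert E d0 6 = Paper.boundaryVert E d0 0 := hP 0
  have p1 : Paper.boundaryVert E d0 7 = Paper.boundaryVert E d0 1 := hP 1
  have n04 : Paper.boundaryVert E d0 0 ≠ Paper.boundaryVert E d0 4 :=
    fun h => n46 (h.symm.trans p0.symm)
  have n05 : Paper.boundaryVert E d0 0 ≠ Paper.boundaryVert E d0 5 :=
    fun h => n56 (h.symm.trans p0.symm)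
  have n15 : Paper.boundaryVert E d0 1 ≠ Paper.boundaryVert E d0 5 :=
    fun h => n57 (h.symm.trans p1.symm)
  have n16 : Paper.boundaryVert E d0 1 ≠ Paper.boundaryVert E d0 6 :=
    fun h => n67 (h.symm.trans p1.symm)
  have n26 : Paper.boundaryVert E d0 2 ≠ Paper.boundaryVert E d0 6 :=
    fun h => n02 (p0.symm.trans h.symm)
  have n27 : Paper.boundaryVert E d0 2 ≠ Paper.boundaryVert E d0 7 :=
    fun h => n12 (h.trans p1).symm
  have n37 : Paper.boundaryVert E d0 3 ≠ Paper.boundaryVert E d0 7 :=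
    fun h => n13 (h.trans p1).symm
  by_cases h03 : Paper.boundaryVert E d0 0 = Paper.boundaryVert E d0 3
  · -- two triangles at k = 0
    have h14 : Paper.boundaryVert E d0 1 ≠ Paper.boundaryVert E d0 4 := fun h =>
      hdne 0 3 (by norm_num) (by norm_num) (by norm_num) (hdext 0 3 h03 h)
    have h25 : Paper.boundaryVert E d0 2 ≠ Paper.boundaryVert E d0 5 := fun h =>
      hdne 2 5 (by norm_num) (by norm_num) (by norm_num)
        (hdext 2 5 h (h03.symm.trans p0.symm))
    refine Or.inr ⟨0, h03, ?_⟩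
    norm_num [List.nodup_cons]
    exact ⟨⟨n01, n02, n04, n05⟩, ⟨n12, h14, n15⟩, ⟨n24, h25⟩, n45⟩
  · by_cases h14 : Paper.boundaryVert E d0 1 = Paper.boundaryVert E d0 4
    · have h25 : Paper.boundaryVert E d0 2 ≠ Paper.boundaryVert E d0 5 := fun h =>
        hdne 1 4 (by norm_num) (by norm_num) (by norm_num) (hdext 1 4 h14 h)
      have n36 : Paper.boundaryVert E d0 3 ≠ Paper.boundaryVert E d0 6 := fun h =>
        h03 (p0.symm.trans h.symm)
      refine Or.inr ⟨1, h14, ?_⟩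
      norm_num [List.nodup_cons]
      exact ⟨⟨n12, n13, n15, n16⟩, ⟨n23, h25, n26⟩, ⟨n35, n36⟩, n56⟩
    · by_cases h25 : Paper.boundaryVert E d0 2 = Paper.boundaryVert E d0 5
      · have n36 : Paper.boundaryVert E d0 3 ≠ Paper.boundaryVert E d0 6 := fun h =>
          h03 (p0.symm.trans h.symm)
        have n47 : Paper.boundaryVert E d0 4 ≠ Paper.boundaryVert E d0 7 := fun h =>
          h14 ((h.trans p1).symm)
        refine Or.inr ⟨2, h25, ?_⟩
        norm_num [List.nodup_cons]
        exact ⟨⟨n23, n24, n26, n27⟩, ⟨n34, n36, n37⟩, ⟨n46, n47⟩, n67⟩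
      · -- all six vertices distinct
        left
        have key : ∀ i j : ℕ, i < j → j < 6 →
            Paper.boundaryVert E d0 i ≠ Paper.boundaryVert E d0 j := by
          intro i j hij hj
          interval_cases j <;> interval_cases i <;>
            first
              | exact n01 | exact n02 | exact h03 | exact n04 | exact n05
              | exact n12 | exact n13 | exact h14 | exact n15
              | exact n23 | exact n24 | exact h25
              | exact n34 | exact n35 | exact n45
        intro i j hij
        rcases Nat.lt_trichotomy i.val j.val with h | h | h
        · exact absurd hij (key i.val j.val h j.isLt)
        · exact Fin.ext h
        · exact absurd hij.symm (key j.val i.val h i.isLt)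
end

section
/- Let G be a connected plane graph with minimum degree at least 3 that contains no cycle of length 4, no cycle of length 7, no cycle of length 9, and no 5-cycle normally adjacent to a 3-cycle. Then no 5-face of G is adjacent to a 6-face of G. -/
section Infra9

open SimpleGraph

variable {V : Type*} {G : SimpleGraph V}

/-- Build a walk along a chain of adjacencies. -/
lemma walk_of_chain9 : ∀ (l : List V) (a b : V), List.Chain G.Adj a (l ++ [b]) →
    ∃ w : G.Walk a b, w.support = a :: (l ++ [b])
  | [], a, b, h => by
    simp only [List.nil_append, List.Chain, List.chain_cons] at h
    exact ⟨SimpleGraph.Walk.cons h.1 SimpleGraph.Walk.nil, by simp⟩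
  | (x :: l), a, b, h => by
    simp only [List.cons_append, List.Chain, List.chain_cons] at h
    obtain ⟨w, hw⟩ := walk_of_chain9 l x b h.2
    exact ⟨SimpleGraph.Walk.cons h.1 w, by simp [hw]⟩

lemma closing_edge_not_mem9 {x y : V} (p : G.Walk x y) (hnd : p.support.Nodup)
    (hlen : 2 ≤ p.length) : s(x, y) ∉ p.edges := by
  cases p with
  | nil => simp
  | cons h q =>
    rename_i z
    intro hmem
    rw [SimpleGraph.Walk.edges_cons, List.mem_cons] at hmem
    rw [SimpleGraph.Walk.support_cons, List.nodup_cons] at hnd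
    rcases hmem with hmem | hmem
    · have hz : y = z := by
        rw [Sym2.congr_right] at hmem
        exact hmem
      subst hz
      have : q.support.length = q.length + 1 := q.length_support
      -- q : G.Walk y y with nodup support : q must be nil
      have hq : q = SimpleGraph.Walk.nil := (SimpleGraph.Walk.isPath_iff_eq_nil (p := q)).mp
        (SimpleGraph.Walk.IsPath.mk' hnd.2)
      subst hq
      simp at hlen
    · exact hnd.1 (q.fst_mem_support_of_mem_edges hmem)

/-- From a nodup list with cyclic chain of adjacencies, build a cycle. -/
lemma exists_cycle9 (a : V) (l : List V) (hl : 2 ≤ l.length)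
    (hnd : (a :: l).Nodup) (hch : List.Chain G.Adj a (l ++ [a])) :
    ∃ w : G.Walk a a, w.IsCycle ∧ w.length = l.length + 1 ∧ w.support = a :: (l ++ [a]) := by
  cases l with
  | nil => simp at hl
  | cons b l' =>
    simp only [List.length_cons] at hl
    simp only [List.cons_append, List.Chain, List.chain_cons] at hch
    obtain ⟨p, hp⟩ := walk_of_chain9 l' b a hch.2
    have hpn : p.support.Nodup := by
      rw [hp]
      rw [List.nodup_cons] at hnd ⊢
      constructor
      · intro hmem
        rw [List.mem_append, List.mem_singleton] at hmem
        rcases hmem with hmem | hmem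
        · exact (List.nodup_cons.mp hnd.2).1 hmem
        · exact hnd.1 (hmem ▸ (List.mem_cons_self : b ∈ b :: l'))
      · have h2 := (List.nodup_cons.mp hnd.2).2
        have h1 : a ∉ l' := fun hm => hnd.1 (List.mem_cons_of_mem b hm)
        rw [List.nodup_append]
        refine ⟨h2, List.nodup_singleton a, ?_⟩
        intro x hx y hxa hxy
        rw [List.mem_singleton] at hxa
        subst hxa hxy
        exact h1 hx
    have hplen : p.length = l'.length + 1 := by
      have h := congrArg List.length hp
      rw [SimpleGraph.Walk.length_support] at h
      simp [List.length_append] at h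
      omega
    refine ⟨SimpleGraph.Walk.cons hch.1 p, ?_, by simp [hplen], by simp [hp]⟩
    rw [SimpleGraph.Walk.cons_isCycle_iff]
    refine ⟨SimpleGraph.Walk.IsPath.mk' hpn, ?_⟩
    rw [Sym2.eq_swap]
    exact closing_edge_not_mem9 p hpn (by rw [hplen]; omega)

lemma sameCycle_mem_invariant9 {α : Type*} (f : Equiv.Perm α) (s : Set α)
    (h1 : ∀ a ∈ s, f a ∈ s) (h2 : ∀ a ∈ s, f⁻¹ a ∈ s) {a b : α}
    (ha : a ∈ s) (hs : f.SameCycle a b) : b ∈ s := by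
  obtain ⟨n, hn⟩ := hs
  rw [← hn]
  clear hn
  induction n using Int.induction_on with
  | zero => simpa using ha
  | succ k ih =>
    have : f ^ ((k : ℤ) + 1) = f * f ^ (k : ℤ) := by
      rw [add_comm, zpow_add, zpow_one]
    rw [this, Equiv.Perm.mul_apply]
    exact h1 _ ih
  | pred k ih =>
    have : f ^ (-(k : ℤ) - 1) = f⁻¹ * f ^ (-(k : ℤ)) := by
      rw [sub_eq_add_neg, add_comm, zpow_add, zpow_neg_one]
    rw [this, Equiv.Perm.mul_apply]
    exact h2 _ ih

namespace Paper

variable (E : PlaneEmbedding G)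

lemma facePerm_apply9 (d : G.Dart) : E.facePerm d = E.rot d.symm := rfl

lemma fst_facePerm9 (d : G.Dart) : (E.facePerm d).fst = d.snd := by
  rw [facePerm_apply9, E.fst_rot]
  rfl

lemma facePerm_ne_self9 (d : G.Dart) : E.facePerm d ≠ d := by
  intro h
  have := fst_facePerm9 E d
  rw [h] at this
  exact d.fst_ne_snd this

variable [Fintype V] [DecidableRel G.Adj]

lemma rot_ne_self9 (d : G.Dart) (h : 2 ≤ G.degree d.fst) : E.rot d ≠ d := by
  intro hfix
  have hcard : 1 < (G.neighborFinset d.fst).card := by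
    rwa [G.card_neighborFinset_eq_degree]
  obtain ⟨w, hw, hwne⟩ := Finset.exists_mem_ne hcard d.snd
  rw [SimpleGraph.mem_neighborFinset] at hw
  have hd' : (⟨(d.fst, w), hw⟩ : G.Dart) ≠ d := by
    intro hh
    apply hwne
    exact congrArg (fun x => x.snd) hh
  obtain ⟨n, hn⟩ := E.rot_cyclic d ⟨(d.fst, w), hw⟩ rfl
  rw [Equiv.Perm.zpow_apply_eq_self_of_apply_eq_self hfix n] at hn
  exact hd' hn.symm

lemma facePerm_ne_symm9 (d : G.Dart) (h : 2 ≤ G.degree d.snd) :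
    E.facePerm d ≠ d.symm := by
  rw [facePerm_apply9]
  exact rot_ne_self9 E d.symm (by exact h)

lemma faceOf_congr9 {d e : G.Dart} (h : E.facePerm.SameCycle d e) :
    faceOf E d = faceOf E e :=
  Set.ext fun x => ⟨fun hx => (h.symm).trans hx, fun hx => h.trans hx⟩

lemma faceSize_congr9 {d e : G.Dart} (h : E.facePerm.SameCycle d e) :
    faceSize E d = faceSize E e := by
  unfold faceSize
  rw [faceOf_congr9 E h]

lemma pow_faceSize_apply9 (d : G.Dart) :
    (E.facePerm ^ (faceSize E d)) d = d := by
  classical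
  have hne := facePerm_ne_self9 E d
  have hmem : d ∈ E.facePerm.support := Equiv.Perm.mem_support.mpr hne
  have h1 : faceOf E d = ↑((E.facePerm.cycleOf d).support) := by
    ext e
    rw [Finset.mem_coe, Equiv.Perm.mem_support_cycleOf_iff]
    exact ⟨fun h => ⟨h, hmem⟩, fun h => h.1⟩
  have h2 : faceSize E d = (E.facePerm.cycleOf d).support.card := by
    unfold faceSize
    rw [h1, Set.ncard_coe_finset]
  have h3 : orderOf (E.facePerm.cycleOf d) = (E.facePerm.cycleOf d).support.card :=
    (Equiv.Perm.isCycle_cycleOf E.facePerm hne).orderOf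
  rw [← Equiv.Perm.cycleOf_pow_apply_self, h2, ← h3, pow_orderOf_eq_one]
  rfl

lemma pow_mod_apply9 {α : Type*} (f : Equiv.Perm α) (x : α) (n : ℕ)
    (hfix : (f ^ n) x = x) (k : ℕ) : (f ^ (k % n)) x = (f ^ k) x := by
  have hq : ∀ q, (f ^ (n * q)) x = x := by
    intro q
    induction q with
    | zero => simp
    | succ q ih =>
      rw [mul_add, mul_one, pow_add, Equiv.Perm.mul_apply, hfix, ih]
  conv_rhs => rw [← Nat.mod_add_div k n]
  rw [pow_add, Equiv.Perm.mul_apply, hq (k / n)]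

/-- Boundary walk data of an `n`-face. -/
lemma exists_boundary9 (hdeg : ∀ v : V, 2 ≤ G.degree v) (d : G.Dart) (n : ℕ) (hn : 1 < n)
    (hsz : faceSize E d = n) :
    ∃ (D : ZMod n → G.Dart) (v : ZMod n → V),
      D 0 = d ∧ (∀ i, E.facePerm (D i) = D (i + 1)) ∧ (∀ i, (D i).fst = v i) ∧
      (∀ i, (D i).snd = v (i + 1)) ∧ (∀ i, G.Adj (v i) (v (i + 1))) ∧
      (∀ i, v i ≠ v (i + 1)) ∧ (∀ i, v i ≠ v (i + 2)) := by
  haveI : NeZero n := ⟨by omega⟩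
  haveI : Fact (1 < n) := ⟨hn⟩
  set f := E.facePerm with hf
  have hfix : (f ^ n) d = d := by rw [← hsz]; exact pow_faceSize_apply9 E d
  have hstep : ∀ j : ZMod n, (f ^ (j + 1).val) d = f ((f ^ j.val) d) := by
    intro j
    have hval : (j + 1).val = (j.val + 1) % n := by rw [ZMod.val_add, ZMod.val_one]
    rw [hval, pow_mod_apply9 f d n hfix, pow_succ', Equiv.Perm.mul_apply]
  have hsnd : ∀ j : ZMod n, ((f ^ j.val) d).snd = ((f ^ (j + 1).val) d).fst := by
    intro j
    rw [hstep j, fst_facePerm9]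
  refine ⟨fun i => (f ^ i.val) d, fun i => ((f ^ i.val) d).fst, by simp,
    fun i => (hstep i).symm, fun i => rfl, fun i => hsnd i, ?_, ?_, ?_⟩
  · intro i
    have := ((f ^ i.val) d).adj
    rwa [hsnd i] at this
  · intro i h
    have h' : ((f ^ i.val) d).fst = ((f ^ (i+1).val) d).fst := h
    rw [← hsnd i] at h'
    exact ((f ^ i.val) d).fst_ne_snd h'
  · intro i h
    have h' : ((f ^ i.val) d).fst = ((f ^ (i+2).val) d).fst := h
    set A := (f ^ i.val) d with hA
    have hBsymm : (f ^ (i+1).val) d = A.symm := by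
      apply SimpleGraph.Dart.ext
      refine Prod.ext ?_ ?_
      · show ((f ^ (i+1).val) d).fst = A.snd
        exact (hsnd i).symm
      · show ((f ^ (i+1).val) d).snd = A.fst
        have h1 := hsnd (i+1)
        have h2 : i + 1 + 1 = i + 2 := by ring
        rw [h2] at h1
        rw [h1, ← h']
    rw [hstep i] at hBsymm
    exact facePerm_ne_symm9 E A (hdeg A.snd) hBsymm

end Paper

lemma inj_five9 {V : Type*} (v : ZMod 5 → V) (h1 : ∀ i, v i ≠ v (i + 1))
    (h2 : ∀ i, v i ≠ v (i + 2)) : Function.Injective v := by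
  intro i j h
  by_contra hne
  have hk : j - i ≠ 0 := fun h0 => hne (by rw [sub_eq_zero] at h0; exact h0.symm)
  have hcases : ∀ m : ZMod 5, m ≠ 0 → m = 1 ∨ m = 2 ∨ m = 3 ∨ m = 4 := by decide
  have hj : j = i + (j - i) := by ring
  rcases hcases _ hk with hm | hm | hm | hm <;> rw [hm] at hj
  · exact h1 i (hj ▸ h)
  · exact h2 i (hj ▸ h)
  · have h5 : i + 3 + 2 = i := by
      rw [add_assoc, show (3 : ZMod 5) + 2 = 0 by decide, add_zero]
    exact h2 (i + 3) (by rw [h5, ← hj]; exact h.symm)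
  · have h5 : i + 4 + 1 = i := by
      rw [add_assoc, show (4 : ZMod 5) + 1 = 0 by decide, add_zero]
    exact h1 (i + 4) (by rw [h5, ← hj]; exact h.symm)

lemma six_cases9 {V : Type*} (v : ZMod 6 → V) (h1 : ∀ i, v i ≠ v (i + 1))
    (h2 : ∀ i, v i ≠ v (i + 2)) : Function.Injective v ∨ ∃ i, v i = v (i + 3) := by
  by_cases h3 : ∃ i, v i = v (i + 3)
  · exact Or.inr h3
  push_neg at h3
  left
  intro i j h
  by_contra hne
  have hk : j - i ≠ 0 := fun h0 => hne (by rw [sub_eq_zero] at h0; exact h0.symm)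
  have hcases : ∀ m : ZMod 6, m ≠ 0 → m = 1 ∨ m = 2 ∨ m = 3 ∨ m = 4 ∨ m = 5 := by decide
  have hj : j = i + (j - i) := by ring
  rcases hcases _ hk with hm | hm | hm | hm | hm <;> rw [hm] at hj
  · exact h1 i (hj ▸ h)
  · exact h2 i (hj ▸ h)
  · exact h3 i (hj ▸ h)
  · have h5 : i + 4 + 2 = i := by
      rw [add_assoc, show (4 : ZMod 6) + 2 = 0 by decide, add_zero]
    exact h2 (i + 4) (by rw [h5, ← hj]; exact h.symm)
  · have h5 : i + 5 + 1 = i := by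
      rw [add_assoc, show (5 : ZMod 6) + 1 = 0 by decide, add_zero]
    exact h1 (i + 5) (by rw [h5, ← hj]; exact h.symm)

namespace Paper

variable [Fintype V] [DecidableRel G.Adj] (E : PlaneEmbedding G)

lemma rot_two_cycle9 (x y : G.Dart)
    (hxy : E.facePerm x = y) (hyx : E.facePerm y.symm = x.symm)
    (hdeg : 3 ≤ G.degree y.fst) (hv : x.snd = y.fst) : False := by
  classical
  have hr1 : E.rot x.symm = y := hxy
  have hr2 : E.rot y = x.symm := by
    have : E.facePerm y.symm = E.rot y.symm.symm := facePerm_apply9 E y.symm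
    rw [SimpleGraph.Dart.symm_symm] at this
    rw [← this, hyx]
  set s : Set G.Dart := {x.symm, y} with hs
  have hmem : ∀ a ∈ s, E.rot a ∈ s := by
    intro a ha
    rcases ha with ha | ha
    · rw [ha, hr1]; right; rfl
    · rw [ha, hr2]; left; rfl
  have hmem' : ∀ a ∈ s, E.rot⁻¹ a ∈ s := by
    intro a ha
    rcases ha with ha | ha
    · rw [ha, ← hr2]
      simp only [Equiv.Perm.inv_def, Equiv.symm_apply_apply]
      right; rfl
    · rw [ha, ← hr1]
      simp only [Equiv.Perm.inv_def, Equiv.symm_apply_apply]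
      left; rfl
  -- find a third dart at y.fst
  have hnsub : ¬ (G.neighborFinset y.fst ⊆ {x.fst, y.snd}) := by
    intro hsub
    have h1 := Finset.card_le_card hsub
    have h2 : ({x.fst, y.snd} : Finset V).card ≤ 2 :=
      (Finset.card_insert_le _ _).trans (by simp)
    rw [G.card_neighborFinset_eq_degree] at h1
    omega
  obtain ⟨w, hw, hwne⟩ := Finset.not_subset.mp hnsub
  rw [SimpleGraph.mem_neighborFinset] at hw
  have hz : E.rot.SameCycle x.symm (⟨(y.fst, w), hw⟩ : G.Dart) := by
    apply E.rot_cyclic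
    show x.symm.fst = y.fst
    have : x.symm.fst = x.snd := rfl
    rw [this, hv]
  have hzs := sameCycle_mem_invariant9 E.rot s hmem hmem' (by left; rfl) hz
  rcases hzs with hzs | hzs
  · apply hwne
    have : w = x.symm.snd := congrArg (fun d : G.Dart => d.snd) hzs
    have hxfst : x.symm.snd = x.fst := rfl
    rw [this, hxfst]
    exact Finset.mem_insert_self _ _
  · apply hwne
    have : w = y.snd := congrArg (fun d : G.Dart => d.snd) hzs
    rw [this]
    exact Finset.mem_insert_of_mem (Finset.mem_singleton_self _)

end Paper

end Infra9


section Nodups9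

lemma nodup3_9 {α : Type*} {a b c : α} (h1 : a ≠ b) (h2 : a ≠ c) (h3 : b ≠ c) :
    ([a, b, c] : List α).Nodup := by simp [h1, h2, h3]

lemma nodup4_9 {α : Type*} {a b c d : α} (h1 : a ≠ b) (h2 : a ≠ c) (h3 : a ≠ d)
    (h4 : b ≠ c) (h5 : b ≠ d) (h6 : c ≠ d) : ([a, b, c, d] : List α).Nodup := by
  simp [h1, h2, h3, h4, h5, h6]

lemma nodup5_9 {α : Type*} {a b c d e : α} (h1 : a ≠ b) (h2 : a ≠ c) (h3 : a ≠ d)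
    (h4 : a ≠ e) (h5 : b ≠ c) (h6 : b ≠ d) (h7 : b ≠ e) (h8 : c ≠ d) (h9 : c ≠ e)
    (h10 : d ≠ e) : ([a, b, c, d, e] : List α).Nodup := by
  simp [h1, h2, h3, h4, h5, h6, h7, h8, h9, h10]

lemma nodup7_9 {α : Type*} {a b c d e f g : α}
    (h1 : a ≠ b) (h2 : a ≠ c) (h3 : a ≠ d) (h4 : a ≠ e) (h5 : a ≠ f) (h6 : a ≠ g)
    (h7 : b ≠ c) (h8 : b ≠ d) (h9 : b ≠ e) (h10 : b ≠ f) (h11 : b ≠ g)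
    (h12 : c ≠ d) (h13 : c ≠ e) (h14 : c ≠ f) (h15 : c ≠ g)
    (h16 : d ≠ e) (h17 : d ≠ f) (h18 : d ≠ g)
    (h19 : e ≠ f) (h20 : e ≠ g) (h21 : f ≠ g) :
    ([a, b, c, d, e, f, g] : List α).Nodup := by
  simp [h1, h2, h3, h4, h5, h6, h7, h8, h9, h10, h11, h12, h13, h14, h15, h16, h17, h18,
    h19, h20, h21]

lemma nodup9_9 {α : Type*} {a b c d e f g h i : α}
    (h1 : a ≠ b) (h2 : a ≠ c) (h3 : a ≠ d) (h4 : a ≠ e) (h5 : a ≠ f) (h6 : a ≠ g)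
    (h7 : a ≠ h) (h8 : a ≠ i)
    (h9 : b ≠ c) (h10 : b ≠ d) (h11 : b ≠ e) (h12 : b ≠ f) (h13 : b ≠ g) (h14 : b ≠ h)
    (h15 : b ≠ i)
    (h16 : c ≠ d) (h17 : c ≠ e) (h18 : c ≠ f) (h19 : c ≠ g) (h20 : c ≠ h) (h21 : c ≠ i)
    (h22 : d ≠ e) (h23 : d ≠ f) (h24 : d ≠ g) (h25 : d ≠ h) (h26 : d ≠ i)
    (h27 : e ≠ f) (h28 : e ≠ g) (h29 : e ≠ h) (h30 : e ≠ i)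
    (h31 : f ≠ g) (h32 : f ≠ h) (h33 : f ≠ i)
    (h34 : g ≠ h) (h35 : g ≠ i) (h36 : h ≠ i) :
    ([a, b, c, d, e, f, g, h, i] : List α).Nodup := by
  simp [h1, h2, h3, h4, h5, h6, h7, h8, h9, h10, h11, h12, h13, h14, h15, h16, h17, h18,
    h19, h20, h21, h22, h23, h24, h25, h26, h27, h28, h29, h30, h31, h32, h33, h34, h35, h36]

end Nodups9


section Assembly9

open SimpleGraph

variable {V : Type*} {G : SimpleGraph V}

lemma first_edge_mem9 {a b : V} (w : G.Walk a a) (l'' : List V)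
    (hsup : w.support = a :: b :: l'') : s(a, b) ∈ w.edges := by
  cases w with
  | nil => simp at hsup
  | cons h q =>
    rename_i z
    rw [SimpleGraph.Walk.support_cons] at hsup
    have h1 : q.support = b :: l'' := by injection hsup
    have h2 : z = b := by
      have h3 := q.support_eq_cons
      rw [h1] at h3
      injection h3 with h4 h5
      exact h4.symm
    subst h2
    rw [SimpleGraph.Walk.edges_cons]
    exact List.mem_cons_self

namespace Paper

variable [Fintype V] [DecidableRel G.Adj]

lemma m3_helper9 (E : PlaneEmbedding G)
    (hmin : ∀ v : V, 3 ≤ G.degree v)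
    (c : ZMod 5 → V) (g : ZMod 6 → V) (Dc : ZMod 5 → G.Dart) (Dg : ZMod 6 → G.Dart)
    (hDc : ∀ i, E.facePerm (Dc i) = Dc (i + 1)) (hDg : ∀ i, E.facePerm (Dg i) = Dg (i + 1))
    (hDcf : ∀ i, (Dc i).fst = c i) (hDcs : ∀ i, (Dc i).snd = c (i + 1))
    (hDgf : ∀ i, (Dg i).fst = g i) (hDgs : ∀ i, (Dg i).snd = g (i + 1))
    (a : ZMod 6) (b : ZMod 5)
    (e1 : g (a + 1 + 1) = c b) (e2 : g (a + 1) = c (b + 1)) (e4 : c (b + 1 + 1) = g a) :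
    False := by
  have h1 : (Dg (a + 1)).symm = Dc b := by
    apply SimpleGraph.Dart.ext
    refine Prod.ext ?_ ?_
    · show (Dg (a + 1)).snd = (Dc b).fst
      rw [hDgs, hDcf]
      exact e1
    · show (Dg (a + 1)).fst = (Dc b).snd
      rw [hDgf, hDcs]
      exact e2
  have h2 : Dc (b + 1) = (Dg a).symm := by
    apply SimpleGraph.Dart.ext
    refine Prod.ext ?_ ?_
    · show (Dc (b + 1)).fst = (Dg a).snd
      rw [hDcf, hDgs]
      exact e2.symm
    · show (Dc (b + 1)).snd = (Dg a).fst
      rw [hDcs, hDgf]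
      exact e4
  refine rot_two_cycle9 E (Dg a) (Dg (a + 1)) (hDg a) ?_ ?_ ?_
  · rw [h1, hDc b, h2]
  · rw [hDgf]
    exact hmin _
  · rw [hDgs, hDgf]

lemma bigcase9 (E : PlaneEmbedding G)
    (hmin : ∀ v : V, 3 ≤ G.degree v)
    (h4 : NoCycleLen G 4) (h7 : NoCycleLen G 7) (h9 : NoCycleLen G 9)
    (h53 : No5CycleNormAdj3 G)
    (c : ZMod 5 → V) (g : ZMod 6 → V) (Dc : ZMod 5 → G.Dart) (Dg : ZMod 6 → G.Dart)
    (hDc : ∀ i, E.facePerm (Dc i) = Dc (i + 1)) (hDg : ∀ i, E.facePerm (Dg i) = Dg (i + 1))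
    (hDcf : ∀ i, (Dc i).fst = c i) (hDcs : ∀ i, (Dc i).snd = c (i + 1))
    (hDgf : ∀ i, (Dg i).fst = g i) (hDgs : ∀ i, (Dg i).snd = g (i + 1))
    (hcinj : Function.Injective c) (hginj : Function.Injective g)
    (hcg0 : c 0 = g 1) (hcg1 : c 1 = g 0) : False := by
  have hacA : ∀ i, G.Adj (c i) (c (i + 1)) := fun i => by
    have h := (Dc i).adj
    rwa [hDcf i, hDcs i] at h
  have hagA : ∀ i, G.Adj (g i) (g (i + 1)) := fun i => by
    have h := (Dg i).adj
    rwa [hDgf i, hDgs i] at h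
  have ac0 : G.Adj (c 0) (c 1) := by have h := hacA 0; rwa [show (0:ZMod 5)+1 = 1 by decide] at h
  have ac1 : G.Adj (c 1) (c 2) := by have h := hacA 1; rwa [show (1:ZMod 5)+1 = 2 by decide] at h
  have ac2 : G.Adj (c 2) (c 3) := by have h := hacA 2; rwa [show (2:ZMod 5)+1 = 3 by decide] at h
  have ac3 : G.Adj (c 3) (c 4) := by have h := hacA 3; rwa [show (3:ZMod 5)+1 = 4 by decide] at h
  have ac4 : G.Adj (c 4) (c 0) := by have h := hacA 4; rwa [show (4:ZMod 5)+1 = 0 by decide] at h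
  have ag0 : G.Adj (g 0) (g 1) := by have h := hagA 0; rwa [show (0:ZMod 6)+1 = 1 by decide] at h
  have ag1 : G.Adj (g 1) (g 2) := by have h := hagA 1; rwa [show (1:ZMod 6)+1 = 2 by decide] at h
  have ag2 : G.Adj (g 2) (g 3) := by have h := hagA 2; rwa [show (2:ZMod 6)+1 = 3 by decide] at h
  have ag3 : G.Adj (g 3) (g 4) := by have h := hagA 3; rwa [show (3:ZMod 6)+1 = 4 by decide] at h
  have ag4 : G.Adj (g 4) (g 5) := by have h := hagA 4; rwa [show (4:ZMod 6)+1 = 5 by decide] at h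
  have ag5 : G.Adj (g 5) (g 0) := by have h := hagA 5; rwa [show (5:ZMod 6)+1 = 0 by decide] at h
  have cne : ∀ i j : ZMod 5, i ≠ j → c i ≠ c j := fun i j hij h => hij (hcinj h)
  have gne : ∀ i j : ZMod 6, i ≠ j → g i ≠ g j := fun i j hij h => hij (hginj h)

  by_cases e22 : c 2 = g 2
  · by_cases e32 : c 3 = g 2
    · exact cne 2 3 (by decide) (e22.trans e32.symm)
    by_cases e33 : c 3 = g 3
    · by_cases e42 : c 4 = g 2
      · exact cne 2 4 (by decide) (e22.trans e42.symm)
      by_cases e43 : c 4 = g 3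
      · exact cne 3 4 (by decide) (e33.trans e43.symm)
      by_cases e44 : c 4 = g 4
      · obtain ⟨w, hw, hwl, -⟩ := exists_cycle9 (g 0) [g 1, g 4, g 5] (by norm_num)
          (nodup4_9 (gne 0 1 (by decide)) (gne 0 4 (by decide)) (gne 0 5 (by decide)) (gne 1 4 (by decide)) (gne 1 5 (by decide)) (gne 4 5 (by decide)))
          (List.Chain.cons (ag0) (List.Chain.cons ((by rw [← e44, ← hcg0]; exact ac4.symm)) (List.Chain.cons (ag4) (List.Chain.cons (ag5) List.Chain.nil))))
        exact h4 _ w hw (by rw [hwl]; rfl)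
      by_cases e45 : c 4 = g 5
      · obtain ⟨w, hw, hwl, -⟩ := exists_cycle9 (g 0) [g 2, g 1, g 5] (by norm_num)
          (nodup4_9 (gne 0 2 (by decide)) (gne 0 1 (by decide)) (gne 0 5 (by decide)) (gne 2 1 (by decide)) (gne 2 5 (by decide)) (gne 1 5 (by decide)))
          (List.Chain.cons ((by rw [← hcg1, ← e22]; exact ac1)) (List.Chain.cons ((ag1).symm) (List.Chain.cons ((by rw [← e45, ← hcg0]; exact ac4.symm)) (List.Chain.cons (ag5) List.Chain.nil))))
        exact h4 _ w hw (by rw [hwl]; rfl)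
      obtain ⟨w, hw, hwl, -⟩ := exists_cycle9 (c 4) [g 1, g 2, g 3] (by norm_num)
        (nodup4_9 ((fun h => cne 4 0 (by decide) (h.trans hcg0.symm))) (e42) (e43) (gne 1 2 (by decide)) (gne 1 3 (by decide)) (gne 2 3 (by decide)))
        (List.Chain.cons ((by rw [← hcg0]; exact ac4)) (List.Chain.cons (ag1) (List.Chain.cons (ag2) (List.Chain.cons ((by rw [← e33]; exact ac3)) List.Chain.nil))))
      exact h4 _ w hw (by rw [hwl]; rfl)
    by_cases e34 : c 3 = g 4
    · by_cases e42 : c 4 = g 2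
      · exact cne 2 4 (by decide) (e22.trans e42.symm)
      by_cases e43 : c 4 = g 3
      · obtain ⟨w, hw, hwl, -⟩ := exists_cycle9 (g 0) [g 1, g 3, g 2] (by norm_num)
          (nodup4_9 (gne 0 1 (by decide)) (gne 0 3 (by decide)) (gne 0 2 (by decide)) (gne 1 3 (by decide)) (gne 1 2 (by decide)) (gne 3 2 (by decide)))
          (List.Chain.cons (ag0) (List.Chain.cons ((by rw [← e43, ← hcg0]; exact ac4.symm)) (List.Chain.cons ((ag2).symm) (List.Chain.cons ((by rw [← hcg1, ← e22]; exact ac1.symm)) List.Chain.nil))))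
        exact h4 _ w hw (by rw [hwl]; rfl)
      by_cases e44 : c 4 = g 4
      · exact cne 3 4 (by decide) (e34.trans e44.symm)
      by_cases e45 : c 4 = g 5
      · obtain ⟨w, hw, hwl, -⟩ := exists_cycle9 (g 0) [g 2, g 1, g 5] (by norm_num)
          (nodup4_9 (gne 0 2 (by decide)) (gne 0 1 (by decide)) (gne 0 5 (by decide)) (gne 2 1 (by decide)) (gne 2 5 (by decide)) (gne 1 5 (by decide)))
          (List.Chain.cons ((by rw [← hcg1, ← e22]; exact ac1)) (List.Chain.cons ((ag1).symm) (List.Chain.cons ((by rw [← e45, ← hcg0]; exact ac4.symm)) (List.Chain.cons (ag5) List.Chain.nil))))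
        exact h4 _ w hw (by rw [hwl]; rfl)
      obtain ⟨w, hw, hwl, -⟩ := exists_cycle9 (c 4) [g 1, g 2, g 4] (by norm_num)
        (nodup4_9 ((fun h => cne 4 0 (by decide) (h.trans hcg0.symm))) (e42) (e44) (gne 1 2 (by decide)) (gne 1 4 (by decide)) (gne 2 4 (by decide)))
        (List.Chain.cons ((by rw [← hcg0]; exact ac4)) (List.Chain.cons (ag1) (List.Chain.cons ((by rw [← e22, ← e34]; exact ac2)) (List.Chain.cons ((by rw [← e34]; exact ac3)) List.Chain.nil))))
      exact h4 _ w hw (by rw [hwl]; rfl)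
    by_cases e35 : c 3 = g 5
    · by_cases e42 : c 4 = g 2
      · exact cne 2 4 (by decide) (e22.trans e42.symm)
      by_cases e43 : c 4 = g 3
      · obtain ⟨w, hw, hwl, -⟩ := exists_cycle9 (g 0) [g 1, g 2, g 5] (by norm_num)
          (nodup4_9 (gne 0 1 (by decide)) (gne 0 2 (by decide)) (gne 0 5 (by decide)) (gne 1 2 (by decide)) (gne 1 5 (by decide)) (gne 2 5 (by decide)))
          (List.Chain.cons (ag0) (List.Chain.cons (ag1) (List.Chain.cons ((by rw [← e22, ← e35]; exact ac2)) (List.Chain.cons (ag5) List.Chain.nil))))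
        exact h4 _ w hw (by rw [hwl]; rfl)
      by_cases e44 : c 4 = g 4
      · obtain ⟨w, hw, hwl, -⟩ := exists_cycle9 (g 0) [g 1, g 2, g 5] (by norm_num)
          (nodup4_9 (gne 0 1 (by decide)) (gne 0 2 (by decide)) (gne 0 5 (by decide)) (gne 1 2 (by decide)) (gne 1 5 (by decide)) (gne 2 5 (by decide)))
          (List.Chain.cons (ag0) (List.Chain.cons (ag1) (List.Chain.cons ((by rw [← e22, ← e35]; exact ac2)) (List.Chain.cons (ag5) List.Chain.nil))))
        exact h4 _ w hw (by rw [hwl]; rfl)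
      by_cases e45 : c 4 = g 5
      · exact cne 3 4 (by decide) (e35.trans e45.symm)
      obtain ⟨w, hw, hwl, -⟩ := exists_cycle9 (c 4) [g 1, g 0, g 5] (by norm_num)
        (nodup4_9 ((fun h => cne 4 0 (by decide) (h.trans hcg0.symm))) ((fun h => cne 4 1 (by decide) (h.trans hcg1.symm))) (e45) (gne 1 0 (by decide)) (gne 1 5 (by decide)) (gne 0 5 (by decide)))
        (List.Chain.cons ((by rw [← hcg0]; exact ac4)) (List.Chain.cons ((ag0).symm) (List.Chain.cons ((ag5).symm) (List.Chain.cons ((by rw [← e35]; exact ac3)) List.Chain.nil))))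
      exact h4 _ w hw (by rw [hwl]; rfl)
    by_cases e42 : c 4 = g 2
    · exact cne 2 4 (by decide) (e22.trans e42.symm)
    by_cases e43 : c 4 = g 3
    · obtain ⟨w, hw, hwl, -⟩ := exists_cycle9 (c 3) [g 2, g 1, g 3] (by norm_num)
        (nodup4_9 (e32) ((fun h => cne 3 0 (by decide) (h.trans hcg0.symm))) (e33) (gne 2 1 (by decide)) (gne 2 3 (by decide)) (gne 1 3 (by decide)))
        (List.Chain.cons ((by rw [← e22]; exact ac2.symm)) (List.Chain.cons ((ag1).symm) (List.Chain.cons ((by rw [← e43, ← hcg0]; exact ac4.symm)) (List.Chain.cons ((by rw [← e43]; exact ac3.symm)) List.Chain.nil))))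
      exact h4 _ w hw (by rw [hwl]; rfl)
    by_cases e44 : c 4 = g 4
    · obtain ⟨w, hw, hwl, -⟩ := exists_cycle9 (c 3) [g 2, g 1, g 4] (by norm_num)
        (nodup4_9 (e32) ((fun h => cne 3 0 (by decide) (h.trans hcg0.symm))) (e34) (gne 2 1 (by decide)) (gne 2 4 (by decide)) (gne 1 4 (by decide)))
        (List.Chain.cons ((by rw [← e22]; exact ac2.symm)) (List.Chain.cons ((ag1).symm) (List.Chain.cons ((by rw [← e44, ← hcg0]; exact ac4.symm)) (List.Chain.cons ((by rw [← e44]; exact ac3.symm)) List.Chain.nil))))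
      exact h4 _ w hw (by rw [hwl]; rfl)
    by_cases e45 : c 4 = g 5
    · obtain ⟨w, hw, hwl, -⟩ := exists_cycle9 (c 3) [g 2, g 0, g 5] (by norm_num)
        (nodup4_9 (e32) ((fun h => cne 3 1 (by decide) (h.trans hcg1.symm))) (e35) (gne 2 0 (by decide)) (gne 2 5 (by decide)) (gne 0 5 (by decide)))
        (List.Chain.cons ((by rw [← e22]; exact ac2.symm)) (List.Chain.cons ((by rw [← hcg1, ← e22]; exact ac1.symm)) (List.Chain.cons ((ag5).symm) (List.Chain.cons ((by rw [← e45]; exact ac3.symm)) List.Chain.nil))))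
      exact h4 _ w hw (by rw [hwl]; rfl)
    obtain ⟨w, hw, hwl, -⟩ := exists_cycle9 (c 3) [c 4, g 1, g 2] (by norm_num)
      (nodup4_9 (cne 3 4 (by decide)) ((fun h => cne 3 0 (by decide) (h.trans hcg0.symm))) (e32) ((fun h => cne 4 0 (by decide) (h.trans hcg0.symm))) (e42) (gne 1 2 (by decide)))
      (List.Chain.cons (ac3) (List.Chain.cons ((by rw [← hcg0]; exact ac4)) (List.Chain.cons (ag1) (List.Chain.cons ((by rw [← e22]; exact ac2)) List.Chain.nil))))
    exact h4 _ w hw (by rw [hwl]; rfl)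
  by_cases e23 : c 2 = g 3
  · by_cases e32 : c 3 = g 2
    · by_cases e42 : c 4 = g 2
      · exact cne 3 4 (by decide) (e32.trans e42.symm)
      by_cases e43 : c 4 = g 3
      · exact cne 2 4 (by decide) (e23.trans e43.symm)
      by_cases e44 : c 4 = g 4
      · obtain ⟨w, hw, hwl, -⟩ := exists_cycle9 (g 0) [g 1, g 2, g 3] (by norm_num)
          (nodup4_9 (gne 0 1 (by decide)) (gne 0 2 (by decide)) (gne 0 3 (by decide)) (gne 1 2 (by decide)) (gne 1 3 (by decide)) (gne 2 3 (by decide)))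
          (List.Chain.cons (ag0) (List.Chain.cons (ag1) (List.Chain.cons (ag2) (List.Chain.cons ((by rw [← hcg1, ← e23]; exact ac1.symm)) List.Chain.nil))))
        exact h4 _ w hw (by rw [hwl]; rfl)
      by_cases e45 : c 4 = g 5
      · obtain ⟨w, hw, hwl, -⟩ := exists_cycle9 (g 0) [g 1, g 2, g 3] (by norm_num)
          (nodup4_9 (gne 0 1 (by decide)) (gne 0 2 (by decide)) (gne 0 3 (by decide)) (gne 1 2 (by decide)) (gne 1 3 (by decide)) (gne 2 3 (by decide)))
          (List.Chain.cons (ag0) (List.Chain.cons (ag1) (List.Chain.cons (ag2) (List.Chain.cons ((by rw [← hcg1, ← e23]; exact ac1.symm)) List.Chain.nil))))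
        exact h4 _ w hw (by rw [hwl]; rfl)
      obtain ⟨w, hw, hwl, -⟩ := exists_cycle9 (g 0) [g 1, g 2, g 3] (by norm_num)
        (nodup4_9 (gne 0 1 (by decide)) (gne 0 2 (by decide)) (gne 0 3 (by decide)) (gne 1 2 (by decide)) (gne 1 3 (by decide)) (gne 2 3 (by decide)))
        (List.Chain.cons (ag0) (List.Chain.cons (ag1) (List.Chain.cons (ag2) (List.Chain.cons ((by rw [← hcg1, ← e23]; exact ac1.symm)) List.Chain.nil))))
      exact h4 _ w hw (by rw [hwl]; rfl)
    by_cases e33 : c 3 = g 3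
    · exact cne 2 3 (by decide) (e23.trans e33.symm)
    by_cases e34 : c 3 = g 4
    · by_cases e42 : c 4 = g 2
      · obtain ⟨w, hw, hwl, -⟩ := exists_cycle9 (g 0) [g 1, g 2, g 3] (by norm_num)
          (nodup4_9 (gne 0 1 (by decide)) (gne 0 2 (by decide)) (gne 0 3 (by decide)) (gne 1 2 (by decide)) (gne 1 3 (by decide)) (gne 2 3 (by decide)))
          (List.Chain.cons (ag0) (List.Chain.cons (ag1) (List.Chain.cons (ag2) (List.Chain.cons ((by rw [← hcg1, ← e23]; exact ac1.symm)) List.Chain.nil))))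
        exact h4 _ w hw (by rw [hwl]; rfl)
      by_cases e43 : c 4 = g 3
      · exact cne 2 4 (by decide) (e23.trans e43.symm)
      by_cases e44 : c 4 = g 4
      · exact cne 3 4 (by decide) (e34.trans e44.symm)
      by_cases e45 : c 4 = g 5
      · obtain ⟨w, hw, hwl, -⟩ := exists_cycle9 (g 0) [g 1, g 2, g 3] (by norm_num)
          (nodup4_9 (gne 0 1 (by decide)) (gne 0 2 (by decide)) (gne 0 3 (by decide)) (gne 1 2 (by decide)) (gne 1 3 (by decide)) (gne 2 3 (by decide)))
          (List.Chain.cons (ag0) (List.Chain.cons (ag1) (List.Chain.cons (ag2) (List.Chain.cons ((by rw [← hcg1, ← e23]; exact ac1.symm)) List.Chain.nil))))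
        exact h4 _ w hw (by rw [hwl]; rfl)
      obtain ⟨w, hw, hwl, -⟩ := exists_cycle9 (g 0) [g 1, g 2, g 3] (by norm_num)
        (nodup4_9 (gne 0 1 (by decide)) (gne 0 2 (by decide)) (gne 0 3 (by decide)) (gne 1 2 (by decide)) (gne 1 3 (by decide)) (gne 2 3 (by decide)))
        (List.Chain.cons (ag0) (List.Chain.cons (ag1) (List.Chain.cons (ag2) (List.Chain.cons ((by rw [← hcg1, ← e23]; exact ac1.symm)) List.Chain.nil))))
      exact h4 _ w hw (by rw [hwl]; rfl)
    by_cases e35 : c 3 = g 5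
    · by_cases e42 : c 4 = g 2
      · obtain ⟨w, hw, hwl, -⟩ := exists_cycle9 (g 0) [g 1, g 2, g 3] (by norm_num)
          (nodup4_9 (gne 0 1 (by decide)) (gne 0 2 (by decide)) (gne 0 3 (by decide)) (gne 1 2 (by decide)) (gne 1 3 (by decide)) (gne 2 3 (by decide)))
          (List.Chain.cons (ag0) (List.Chain.cons (ag1) (List.Chain.cons (ag2) (List.Chain.cons ((by rw [← hcg1, ← e23]; exact ac1.symm)) List.Chain.nil))))
        exact h4 _ w hw (by rw [hwl]; rfl)
      by_cases e43 : c 4 = g 3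
      · exact cne 2 4 (by decide) (e23.trans e43.symm)
      by_cases e44 : c 4 = g 4
      · obtain ⟨w, hw, hwl, -⟩ := exists_cycle9 (g 0) [g 1, g 2, g 3] (by norm_num)
          (nodup4_9 (gne 0 1 (by decide)) (gne 0 2 (by decide)) (gne 0 3 (by decide)) (gne 1 2 (by decide)) (gne 1 3 (by decide)) (gne 2 3 (by decide)))
          (List.Chain.cons (ag0) (List.Chain.cons (ag1) (List.Chain.cons (ag2) (List.Chain.cons ((by rw [← hcg1, ← e23]; exact ac1.symm)) List.Chain.nil))))
        exact h4 _ w hw (by rw [hwl]; rfl)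
      by_cases e45 : c 4 = g 5
      · exact cne 3 4 (by decide) (e35.trans e45.symm)
      obtain ⟨w, hw, hwl, -⟩ := exists_cycle9 (c 4) [g 1, g 0, g 5] (by norm_num)
        (nodup4_9 ((fun h => cne 4 0 (by decide) (h.trans hcg0.symm))) ((fun h => cne 4 1 (by decide) (h.trans hcg1.symm))) (e45) (gne 1 0 (by decide)) (gne 1 5 (by decide)) (gne 0 5 (by decide)))
        (List.Chain.cons ((by rw [← hcg0]; exact ac4)) (List.Chain.cons ((ag0).symm) (List.Chain.cons ((ag5).symm) (List.Chain.cons ((by rw [← e35]; exact ac3)) List.Chain.nil))))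
      exact h4 _ w hw (by rw [hwl]; rfl)
    by_cases e42 : c 4 = g 2
    · obtain ⟨w, hw, hwl, -⟩ := exists_cycle9 (g 0) [g 1, g 2, g 3] (by norm_num)
        (nodup4_9 (gne 0 1 (by decide)) (gne 0 2 (by decide)) (gne 0 3 (by decide)) (gne 1 2 (by decide)) (gne 1 3 (by decide)) (gne 2 3 (by decide)))
        (List.Chain.cons (ag0) (List.Chain.cons (ag1) (List.Chain.cons (ag2) (List.Chain.cons ((by rw [← hcg1, ← e23]; exact ac1.symm)) List.Chain.nil))))
      exact h4 _ w hw (by rw [hwl]; rfl)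
    by_cases e43 : c 4 = g 3
    · exact cne 2 4 (by decide) (e23.trans e43.symm)
    by_cases e44 : c 4 = g 4
    · obtain ⟨w, hw, hwl, -⟩ := exists_cycle9 (g 0) [g 1, g 2, g 3] (by norm_num)
        (nodup4_9 (gne 0 1 (by decide)) (gne 0 2 (by decide)) (gne 0 3 (by decide)) (gne 1 2 (by decide)) (gne 1 3 (by decide)) (gne 2 3 (by decide)))
        (List.Chain.cons (ag0) (List.Chain.cons (ag1) (List.Chain.cons (ag2) (List.Chain.cons ((by rw [← hcg1, ← e23]; exact ac1.symm)) List.Chain.nil))))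
      exact h4 _ w hw (by rw [hwl]; rfl)
    by_cases e45 : c 4 = g 5
    · obtain ⟨w, hw, hwl, -⟩ := exists_cycle9 (c 3) [g 3, g 0, g 5] (by norm_num)
        (nodup4_9 (e33) ((fun h => cne 3 1 (by decide) (h.trans hcg1.symm))) (e35) (gne 3 0 (by decide)) (gne 3 5 (by decide)) (gne 0 5 (by decide)))
        (List.Chain.cons ((by rw [← e23]; exact ac2.symm)) (List.Chain.cons ((by rw [← hcg1, ← e23]; exact ac1.symm)) (List.Chain.cons ((ag5).symm) (List.Chain.cons ((by rw [← e45]; exact ac3.symm)) List.Chain.nil))))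
      exact h4 _ w hw (by rw [hwl]; rfl)
    obtain ⟨w, hw, hwl, -⟩ := exists_cycle9 (g 0) [g 1, g 2, g 3] (by norm_num)
      (nodup4_9 (gne 0 1 (by decide)) (gne 0 2 (by decide)) (gne 0 3 (by decide)) (gne 1 2 (by decide)) (gne 1 3 (by decide)) (gne 2 3 (by decide)))
      (List.Chain.cons (ag0) (List.Chain.cons (ag1) (List.Chain.cons (ag2) (List.Chain.cons ((by rw [← hcg1, ← e23]; exact ac1.symm)) List.Chain.nil))))
    exact h4 _ w hw (by rw [hwl]; rfl)
  by_cases e24 : c 2 = g 4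
  · by_cases e32 : c 3 = g 2
    · by_cases e42 : c 4 = g 2
      · exact cne 3 4 (by decide) (e32.trans e42.symm)
      by_cases e43 : c 4 = g 3
      · obtain ⟨w, hw, hwl, -⟩ := exists_cycle9 (g 0) [g 1, g 2, g 4] (by norm_num)
          (nodup4_9 (gne 0 1 (by decide)) (gne 0 2 (by decide)) (gne 0 4 (by decide)) (gne 1 2 (by decide)) (gne 1 4 (by decide)) (gne 2 4 (by decide)))
          (List.Chain.cons (ag0) (List.Chain.cons (ag1) (List.Chain.cons ((by rw [← e24, ← e32]; exact ac2.symm)) (List.Chain.cons ((by rw [← hcg1, ← e24]; exact ac1.symm)) List.Chain.nil))))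
        exact h4 _ w hw (by rw [hwl]; rfl)
      by_cases e44 : c 4 = g 4
      · exact cne 2 4 (by decide) (e24.trans e44.symm)
      by_cases e45 : c 4 = g 5
      · obtain ⟨w, hw, hwl, -⟩ := exists_cycle9 (g 0) [g 1, g 2, g 4] (by norm_num)
          (nodup4_9 (gne 0 1 (by decide)) (gne 0 2 (by decide)) (gne 0 4 (by decide)) (gne 1 2 (by decide)) (gne 1 4 (by decide)) (gne 2 4 (by decide)))
          (List.Chain.cons (ag0) (List.Chain.cons (ag1) (List.Chain.cons ((by rw [← e24, ← e32]; exact ac2.symm)) (List.Chain.cons ((by rw [← hcg1, ← e24]; exact ac1.symm)) List.Chain.nil))))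
        exact h4 _ w hw (by rw [hwl]; rfl)
      obtain ⟨w, hw, hwl, -⟩ := exists_cycle9 (g 0) [g 1, g 2, g 4] (by norm_num)
        (nodup4_9 (gne 0 1 (by decide)) (gne 0 2 (by decide)) (gne 0 4 (by decide)) (gne 1 2 (by decide)) (gne 1 4 (by decide)) (gne 2 4 (by decide)))
        (List.Chain.cons (ag0) (List.Chain.cons (ag1) (List.Chain.cons ((by rw [← e24, ← e32]; exact ac2.symm)) (List.Chain.cons ((by rw [← hcg1, ← e24]; exact ac1.symm)) List.Chain.nil))))
      exact h4 _ w hw (by rw [hwl]; rfl)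
    by_cases e33 : c 3 = g 3
    · by_cases e42 : c 4 = g 2
      · obtain ⟨w5, hw5, hl5, hsup5⟩ := exists_cycle9 (g 0) [g 4, g 3, g 2, g 1] (by norm_num)
          (nodup5_9 (gne 0 4 (by decide)) (gne 0 3 (by decide)) (gne 0 2 (by decide)) (gne 0 1 (by decide)) (gne 4 3 (by decide)) (gne 4 2 (by decide)) (gne 4 1 (by decide)) (gne 3 2 (by decide)) (gne 3 1 (by decide)) (gne 2 1 (by decide)))
          (List.Chain.cons ((by rw [← hcg1, ← e24]; exact ac1)) (List.Chain.cons ((ag3).symm) (List.Chain.cons ((ag2).symm) (List.Chain.cons ((ag1).symm) (List.Chain.cons ((ag0).symm) List.Chain.nil)))))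
        obtain ⟨w3, hw3, hl3, hsup3⟩ := exists_cycle9 (g 0) [g 4, g 5] (by norm_num)
          (nodup3_9 (gne 0 4 (by decide)) (gne 0 5 (by decide)) (gne 4 5 (by decide)))
          (List.Chain.cons ((by rw [← hcg1, ← e24]; exact ac1)) (List.Chain.cons (ag4) (List.Chain.cons (ag5) List.Chain.nil)))
        refine h53 (g 0) (g 0) w5 w3 hw5 (by rw [hl5]; rfl) hw3 (by rw [hl3]; rfl)
          ⟨g 0, g 4, gne 0 4 (by decide), ?_, ?_, ?_⟩
        · exact first_edge_mem9 w5 [g 3, g 2, g 1, g 0] (by rw [hsup5]; rfl)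
        · exact first_edge_mem9 w3 [g 5, g 0] (by rw [hsup3]; rfl)
        · intro z
          rw [hsup5, hsup3]
          simp only [List.cons_append, List.nil_append, List.mem_cons, List.not_mem_nil,
            or_false]
          constructor
          · rintro ⟨hz5, hz3⟩
            rcases hz3 with rfl | rfl | rfl | rfl
            · left; rfl
            · right; rfl
            · rcases hz5 with h | h | h | h | h | h
              · exact absurd h (gne 5 0 (by decide))
              · exact absurd h (gne 5 4 (by decide))
              · exact absurd h (gne 5 3 (by decide))
              · exact absurd h (gne 5 2 (by decide))
              · exact absurd h (gne 5 1 (by decide))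
              · exact absurd h (gne 5 0 (by decide))
            · left; rfl
          · rintro (rfl | rfl)
            · exact ⟨Or.inl rfl, Or.inl rfl⟩
            · exact ⟨Or.inr (Or.inl rfl), Or.inr (Or.inl rfl)⟩
      by_cases e43 : c 4 = g 3
      · exact cne 3 4 (by decide) (e33.trans e43.symm)
      by_cases e44 : c 4 = g 4
      · exact cne 2 4 (by decide) (e24.trans e44.symm)
      by_cases e45 : c 4 = g 5
      · obtain ⟨w, hw, hwl, -⟩ := exists_cycle9 (g 0) [g 1, g 5, g 4] (by norm_num)
          (nodup4_9 (gne 0 1 (by decide)) (gne 0 5 (by decide)) (gne 0 4 (by decide)) (gne 1 5 (by decide)) (gne 1 4 (by decide)) (gne 5 4 (by decide)))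
          (List.Chain.cons (ag0) (List.Chain.cons ((by rw [← e45, ← hcg0]; exact ac4.symm)) (List.Chain.cons ((ag4).symm) (List.Chain.cons ((by rw [← hcg1, ← e24]; exact ac1.symm)) List.Chain.nil))))
        exact h4 _ w hw (by rw [hwl]; rfl)
      obtain ⟨w, hw, hwl, -⟩ := exists_cycle9 (c 4) [g 1, g 2, g 3] (by norm_num)
        (nodup4_9 ((fun h => cne 4 0 (by decide) (h.trans hcg0.symm))) (e42) (e43) (gne 1 2 (by decide)) (gne 1 3 (by decide)) (gne 2 3 (by decide)))
        (List.Chain.cons ((by rw [← hcg0]; exact ac4)) (List.Chain.cons (ag1) (List.Chain.cons (ag2) (List.Chain.cons ((by rw [← e33]; exact ac3)) List.Chain.nil))))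
      exact h4 _ w hw (by rw [hwl]; rfl)
    by_cases e34 : c 3 = g 4
    · exact cne 2 3 (by decide) (e24.trans e34.symm)
    by_cases e35 : c 3 = g 5
    · by_cases e42 : c 4 = g 2
      · obtain ⟨w, hw, hwl, -⟩ := exists_cycle9 (g 0) [g 1, g 2, g 5] (by norm_num)
          (nodup4_9 (gne 0 1 (by decide)) (gne 0 2 (by decide)) (gne 0 5 (by decide)) (gne 1 2 (by decide)) (gne 1 5 (by decide)) (gne 2 5 (by decide)))
          (List.Chain.cons (ag0) (List.Chain.cons (ag1) (List.Chain.cons ((by rw [← e35, ← e42]; exact ac3.symm)) (List.Chain.cons (ag5) List.Chain.nil))))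
        exact h4 _ w hw (by rw [hwl]; rfl)
      by_cases e43 : c 4 = g 3
      · obtain ⟨w, hw, hwl, -⟩ := exists_cycle9 (g 0) [g 1, g 3, g 4] (by norm_num)
          (nodup4_9 (gne 0 1 (by decide)) (gne 0 3 (by decide)) (gne 0 4 (by decide)) (gne 1 3 (by decide)) (gne 1 4 (by decide)) (gne 3 4 (by decide)))
          (List.Chain.cons (ag0) (List.Chain.cons ((by rw [← e43, ← hcg0]; exact ac4.symm)) (List.Chain.cons (ag3) (List.Chain.cons ((by rw [← hcg1, ← e24]; exact ac1.symm)) List.Chain.nil))))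
        exact h4 _ w hw (by rw [hwl]; rfl)
      by_cases e44 : c 4 = g 4
      · exact cne 2 4 (by decide) (e24.trans e44.symm)
      by_cases e45 : c 4 = g 5
      · exact cne 3 4 (by decide) (e35.trans e45.symm)
      obtain ⟨w, hw, hwl, -⟩ := exists_cycle9 (c 4) [g 1, g 0, g 5] (by norm_num)
        (nodup4_9 ((fun h => cne 4 0 (by decide) (h.trans hcg0.symm))) ((fun h => cne 4 1 (by decide) (h.trans hcg1.symm))) (e45) (gne 1 0 (by decide)) (gne 1 5 (by decide)) (gne 0 5 (by decide)))
        (List.Chain.cons ((by rw [← hcg0]; exact ac4)) (List.Chain.cons ((ag0).symm) (List.Chain.cons ((ag5).symm) (List.Chain.cons ((by rw [← e35]; exact ac3)) List.Chain.nil))))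
      exact h4 _ w hw (by rw [hwl]; rfl)
    by_cases e42 : c 4 = g 2
    · obtain ⟨w, hw, hwl, -⟩ := exists_cycle9 (c 3) [g 2, g 3, g 4] (by norm_num)
        (nodup4_9 (e32) (e33) (e34) (gne 2 3 (by decide)) (gne 2 4 (by decide)) (gne 3 4 (by decide)))
        (List.Chain.cons ((by rw [← e42]; exact ac3)) (List.Chain.cons (ag2) (List.Chain.cons (ag3) (List.Chain.cons ((by rw [← e24]; exact ac2)) List.Chain.nil))))
      exact h4 _ w hw (by rw [hwl]; rfl)
    by_cases e43 : c 4 = g 3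
    · obtain ⟨w, hw, hwl, -⟩ := exists_cycle9 (g 0) [g 1, g 3, g 4] (by norm_num)
        (nodup4_9 (gne 0 1 (by decide)) (gne 0 3 (by decide)) (gne 0 4 (by decide)) (gne 1 3 (by decide)) (gne 1 4 (by decide)) (gne 3 4 (by decide)))
        (List.Chain.cons (ag0) (List.Chain.cons ((by rw [← e43, ← hcg0]; exact ac4.symm)) (List.Chain.cons (ag3) (List.Chain.cons ((by rw [← hcg1, ← e24]; exact ac1.symm)) List.Chain.nil))))
      exact h4 _ w hw (by rw [hwl]; rfl)
    by_cases e44 : c 4 = g 4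
    · exact cne 2 4 (by decide) (e24.trans e44.symm)
    by_cases e45 : c 4 = g 5
    · obtain ⟨w, hw, hwl, -⟩ := exists_cycle9 (c 3) [g 4, g 0, g 5] (by norm_num)
        (nodup4_9 (e34) ((fun h => cne 3 1 (by decide) (h.trans hcg1.symm))) (e35) (gne 4 0 (by decide)) (gne 4 5 (by decide)) (gne 0 5 (by decide)))
        (List.Chain.cons ((by rw [← e24]; exact ac2.symm)) (List.Chain.cons ((by rw [← hcg1, ← e24]; exact ac1.symm)) (List.Chain.cons ((ag5).symm) (List.Chain.cons ((by rw [← e45]; exact ac3.symm)) List.Chain.nil))))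
      exact h4 _ w hw (by rw [hwl]; rfl)
    obtain ⟨w5, hw5, hl5, hsup5⟩ := exists_cycle9 (g 0) [g 4, c 3, c 4, g 1] (by norm_num)
      (nodup5_9 (gne 0 4 (by decide)) (Ne.symm ((fun h => cne 3 1 (by decide) (h.trans hcg1.symm)))) (Ne.symm ((fun h => cne 4 1 (by decide) (h.trans hcg1.symm)))) (gne 0 1 (by decide)) (Ne.symm (e34)) (Ne.symm (e44)) (gne 4 1 (by decide)) (cne 3 4 (by decide)) ((fun h => cne 3 0 (by decide) (h.trans hcg0.symm))) ((fun h => cne 4 0 (by decide) (h.trans hcg0.symm))))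
      (List.Chain.cons ((by rw [← hcg1, ← e24]; exact ac1)) (List.Chain.cons ((by rw [← e24]; exact ac2)) (List.Chain.cons (ac3) (List.Chain.cons ((by rw [← hcg0]; exact ac4)) (List.Chain.cons ((ag0).symm) List.Chain.nil)))))
    obtain ⟨w3, hw3, hl3, hsup3⟩ := exists_cycle9 (g 0) [g 4, g 5] (by norm_num)
      (nodup3_9 (gne 0 4 (by decide)) (gne 0 5 (by decide)) (gne 4 5 (by decide)))
      (List.Chain.cons ((by rw [← hcg1, ← e24]; exact ac1)) (List.Chain.cons (ag4) (List.Chain.cons (ag5) List.Chain.nil)))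
    refine h53 (g 0) (g 0) w5 w3 hw5 (by rw [hl5]; rfl) hw3 (by rw [hl3]; rfl)
      ⟨g 0, g 4, gne 0 4 (by decide), ?_, ?_, ?_⟩
    · exact first_edge_mem9 w5 [c 3, c 4, g 1, g 0] (by rw [hsup5]; rfl)
    · exact first_edge_mem9 w3 [g 5, g 0] (by rw [hsup3]; rfl)
    · intro z
      rw [hsup5, hsup3]
      simp only [List.cons_append, List.nil_append, List.mem_cons, List.not_mem_nil,
        or_false]
      constructor
      · rintro ⟨hz5, hz3⟩
        rcases hz3 with rfl | rfl | rfl | rfl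
        · left; rfl
        · right; rfl
        · rcases hz5 with h | h | h | h | h | h
          · exact absurd h (gne 5 0 (by decide))
          · exact absurd h (gne 5 4 (by decide))
          · exact absurd h (Ne.symm (e35))
          · exact absurd h (Ne.symm (e45))
          · exact absurd h (gne 5 1 (by decide))
          · exact absurd h (gne 5 0 (by decide))
        · left; rfl
      · rintro (rfl | rfl)
        · exact ⟨Or.inl rfl, Or.inl rfl⟩
        · exact ⟨Or.inr (Or.inl rfl), Or.inr (Or.inl rfl)⟩
  by_cases e25 : c 2 = g 5
  · by_cases e32 : c 3 = g 2
    · by_cases e42 : c 4 = g 2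
      · exact cne 3 4 (by decide) (e32.trans e42.symm)
      by_cases e43 : c 4 = g 3
      · obtain ⟨w, hw, hwl, -⟩ := exists_cycle9 (g 0) [g 1, g 2, g 5] (by norm_num)
          (nodup4_9 (gne 0 1 (by decide)) (gne 0 2 (by decide)) (gne 0 5 (by decide)) (gne 1 2 (by decide)) (gne 1 5 (by decide)) (gne 2 5 (by decide)))
          (List.Chain.cons (ag0) (List.Chain.cons (ag1) (List.Chain.cons ((by rw [← e25, ← e32]; exact ac2.symm)) (List.Chain.cons (ag5) List.Chain.nil))))
        exact h4 _ w hw (by rw [hwl]; rfl)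
      by_cases e44 : c 4 = g 4
      · obtain ⟨w, hw, hwl, -⟩ := exists_cycle9 (g 0) [g 1, g 2, g 5] (by norm_num)
          (nodup4_9 (gne 0 1 (by decide)) (gne 0 2 (by decide)) (gne 0 5 (by decide)) (gne 1 2 (by decide)) (gne 1 5 (by decide)) (gne 2 5 (by decide)))
          (List.Chain.cons (ag0) (List.Chain.cons (ag1) (List.Chain.cons ((by rw [← e25, ← e32]; exact ac2.symm)) (List.Chain.cons (ag5) List.Chain.nil))))
        exact h4 _ w hw (by rw [hwl]; rfl)
      by_cases e45 : c 4 = g 5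
      · exact cne 2 4 (by decide) (e25.trans e45.symm)
      obtain ⟨w, hw, hwl, -⟩ := exists_cycle9 (g 0) [g 1, g 2, g 5] (by norm_num)
        (nodup4_9 (gne 0 1 (by decide)) (gne 0 2 (by decide)) (gne 0 5 (by decide)) (gne 1 2 (by decide)) (gne 1 5 (by decide)) (gne 2 5 (by decide)))
        (List.Chain.cons (ag0) (List.Chain.cons (ag1) (List.Chain.cons ((by rw [← e25, ← e32]; exact ac2.symm)) (List.Chain.cons (ag5) List.Chain.nil))))
      exact h4 _ w hw (by rw [hwl]; rfl)
    by_cases e33 : c 3 = g 3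
    · by_cases e42 : c 4 = g 2
      · obtain ⟨w5, hw5, hl5, hsup5⟩ := exists_cycle9 (g 3) [g 5, g 0, g 1, g 2] (by norm_num)
          (nodup5_9 (gne 3 5 (by decide)) (gne 3 0 (by decide)) (gne 3 1 (by decide)) (gne 3 2 (by decide)) (gne 5 0 (by decide)) (gne 5 1 (by decide)) (gne 5 2 (by decide)) (gne 0 1 (by decide)) (gne 0 2 (by decide)) (gne 1 2 (by decide)))
          (List.Chain.cons ((by rw [← e25, ← e33]; exact ac2.symm)) (List.Chain.cons (ag5) (List.Chain.cons (ag0) (List.Chain.cons (ag1) (List.Chain.cons (ag2) List.Chain.nil)))))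
        obtain ⟨w3, hw3, hl3, hsup3⟩ := exists_cycle9 (g 3) [g 5, g 4] (by norm_num)
          (nodup3_9 (gne 3 5 (by decide)) (gne 3 4 (by decide)) (gne 5 4 (by decide)))
          (List.Chain.cons ((by rw [← e25, ← e33]; exact ac2.symm)) (List.Chain.cons ((ag4).symm) (List.Chain.cons ((ag3).symm) List.Chain.nil)))
        refine h53 (g 3) (g 3) w5 w3 hw5 (by rw [hl5]; rfl) hw3 (by rw [hl3]; rfl)
          ⟨g 3, g 5, gne 3 5 (by decide), ?_, ?_, ?_⟩
        · exact first_edge_mem9 w5 [g 0, g 1, g 2, g 3] (by rw [hsup5]; rfl)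
        · exact first_edge_mem9 w3 [g 4, g 3] (by rw [hsup3]; rfl)
        · intro z
          rw [hsup5, hsup3]
          simp only [List.cons_append, List.nil_append, List.mem_cons, List.not_mem_nil,
            or_false]
          constructor
          · rintro ⟨hz5, hz3⟩
            rcases hz3 with rfl | rfl | rfl | rfl
            · left; rfl
            · right; rfl
            · rcases hz5 with h | h | h | h | h | h
              · exact absurd h (gne 4 3 (by decide))
              · exact absurd h (gne 4 5 (by decide))
              · exact absurd h (gne 4 0 (by decide))
              · exact absurd h (gne 4 1 (by decide))
              · exact absurd h (gne 4 2 (by decide))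
              · exact absurd h (gne 4 3 (by decide))
            · left; rfl
          · rintro (rfl | rfl)
            · exact ⟨Or.inl rfl, Or.inl rfl⟩
            · exact ⟨Or.inr (Or.inl rfl), Or.inr (Or.inl rfl)⟩
      by_cases e43 : c 4 = g 3
      · exact cne 3 4 (by decide) (e33.trans e43.symm)
      by_cases e44 : c 4 = g 4
      · obtain ⟨w, hw, hwl, -⟩ := exists_cycle9 (g 0) [g 1, g 4, g 5] (by norm_num)
          (nodup4_9 (gne 0 1 (by decide)) (gne 0 4 (by decide)) (gne 0 5 (by decide)) (gne 1 4 (by decide)) (gne 1 5 (by decide)) (gne 4 5 (by decide)))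
          (List.Chain.cons (ag0) (List.Chain.cons ((by rw [← e44, ← hcg0]; exact ac4.symm)) (List.Chain.cons (ag4) (List.Chain.cons (ag5) List.Chain.nil))))
        exact h4 _ w hw (by rw [hwl]; rfl)
      by_cases e45 : c 4 = g 5
      · exact cne 2 4 (by decide) (e25.trans e45.symm)
      obtain ⟨w, hw, hwl, -⟩ := exists_cycle9 (c 4) [g 1, g 2, g 3] (by norm_num)
        (nodup4_9 ((fun h => cne 4 0 (by decide) (h.trans hcg0.symm))) (e42) (e43) (gne 1 2 (by decide)) (gne 1 3 (by decide)) (gne 2 3 (by decide)))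
        (List.Chain.cons ((by rw [← hcg0]; exact ac4)) (List.Chain.cons (ag1) (List.Chain.cons (ag2) (List.Chain.cons ((by rw [← e33]; exact ac3)) List.Chain.nil))))
      exact h4 _ w hw (by rw [hwl]; rfl)
    by_cases e34 : c 3 = g 4
    · by_cases e42 : c 4 = g 2
      · obtain ⟨w5, hw5, hl5, hsup5⟩ := exists_cycle9 (g 2) [g 4, g 5, g 0, g 1] (by norm_num)
          (nodup5_9 (gne 2 4 (by decide)) (gne 2 5 (by decide)) (gne 2 0 (by decide)) (gne 2 1 (by decide)) (gne 4 5 (by decide)) (gne 4 0 (by decide)) (gne 4 1 (by decide)) (gne 5 0 (by decide)) (gne 5 1 (by decide)) (gne 0 1 (by decide)))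
          (List.Chain.cons ((by rw [← e34, ← e42]; exact ac3.symm)) (List.Chain.cons (ag4) (List.Chain.cons (ag5) (List.Chain.cons (ag0) (List.Chain.cons (ag1) List.Chain.nil)))))
        obtain ⟨w3, hw3, hl3, hsup3⟩ := exists_cycle9 (g 2) [g 4, g 3] (by norm_num)
          (nodup3_9 (gne 2 4 (by decide)) (gne 2 3 (by decide)) (gne 4 3 (by decide)))
          (List.Chain.cons ((by rw [← e34, ← e42]; exact ac3.symm)) (List.Chain.cons ((ag3).symm) (List.Chain.cons ((ag2).symm) List.Chain.nil)))
        refine h53 (g 2) (g 2) w5 w3 hw5 (by rw [hl5]; rfl) hw3 (by rw [hl3]; rfl)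
          ⟨g 2, g 4, gne 2 4 (by decide), ?_, ?_, ?_⟩
        · exact first_edge_mem9 w5 [g 5, g 0, g 1, g 2] (by rw [hsup5]; rfl)
        · exact first_edge_mem9 w3 [g 3, g 2] (by rw [hsup3]; rfl)
        · intro z
          rw [hsup5, hsup3]
          simp only [List.cons_append, List.nil_append, List.mem_cons, List.not_mem_nil,
            or_false]
          constructor
          · rintro ⟨hz5, hz3⟩
            rcases hz3 with rfl | rfl | rfl | rfl
            · left; rfl
            · right; rfl
            · rcases hz5 with h | h | h | h | h | h
              · exact absurd h (gne 3 2 (by decide))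
              · exact absurd h (gne 3 4 (by decide))
              · exact absurd h (gne 3 5 (by decide))
              · exact absurd h (gne 3 0 (by decide))
              · exact absurd h (gne 3 1 (by decide))
              · exact absurd h (gne 3 2 (by decide))
            · left; rfl
          · rintro (rfl | rfl)
            · exact ⟨Or.inl rfl, Or.inl rfl⟩
            · exact ⟨Or.inr (Or.inl rfl), Or.inr (Or.inl rfl)⟩
      by_cases e43 : c 4 = g 3
      · obtain ⟨w5, hw5, hl5, hsup5⟩ := exists_cycle9 (g 1) [g 3, g 4, g 5, g 0] (by norm_num)
          (nodup5_9 (gne 1 3 (by decide)) (gne 1 4 (by decide)) (gne 1 5 (by decide)) (gne 1 0 (by decide)) (gne 3 4 (by decide)) (gne 3 5 (by decide)) (gne 3 0 (by decide)) (gne 4 5 (by decide)) (gne 4 0 (by decide)) (gne 5 0 (by decide)))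
          (List.Chain.cons ((by rw [← e43, ← hcg0]; exact ac4.symm)) (List.Chain.cons (ag3) (List.Chain.cons (ag4) (List.Chain.cons (ag5) (List.Chain.cons (ag0) List.Chain.nil)))))
        obtain ⟨w3, hw3, hl3, hsup3⟩ := exists_cycle9 (g 1) [g 3, g 2] (by norm_num)
          (nodup3_9 (gne 1 3 (by decide)) (gne 1 2 (by decide)) (gne 3 2 (by decide)))
          (List.Chain.cons ((by rw [← e43, ← hcg0]; exact ac4.symm)) (List.Chain.cons ((ag2).symm) (List.Chain.cons ((ag1).symm) List.Chain.nil)))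
        refine h53 (g 1) (g 1) w5 w3 hw5 (by rw [hl5]; rfl) hw3 (by rw [hl3]; rfl)
          ⟨g 1, g 3, gne 1 3 (by decide), ?_, ?_, ?_⟩
        · exact first_edge_mem9 w5 [g 4, g 5, g 0, g 1] (by rw [hsup5]; rfl)
        · exact first_edge_mem9 w3 [g 2, g 1] (by rw [hsup3]; rfl)
        · intro z
          rw [hsup5, hsup3]
          simp only [List.cons_append, List.nil_append, List.mem_cons, List.not_mem_nil,
            or_false]
          constructor
          · rintro ⟨hz5, hz3⟩
            rcases hz3 with rfl | rfl | rfl | rfl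
            · left; rfl
            · right; rfl
            · rcases hz5 with h | h | h | h | h | h
              · exact absurd h (gne 2 1 (by decide))
              · exact absurd h (gne 2 3 (by decide))
              · exact absurd h (gne 2 4 (by decide))
              · exact absurd h (gne 2 5 (by decide))
              · exact absurd h (gne 2 0 (by decide))
              · exact absurd h (gne 2 1 (by decide))
            · left; rfl
          · rintro (rfl | rfl)
            · exact ⟨Or.inl rfl, Or.inl rfl⟩
            · exact ⟨Or.inr (Or.inl rfl), Or.inr (Or.inl rfl)⟩
      by_cases e44 : c 4 = g 4
      · exact cne 3 4 (by decide) (e34.trans e44.symm)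
      by_cases e45 : c 4 = g 5
      · exact cne 2 4 (by decide) (e25.trans e45.symm)
      refine Paper.m3_helper9 E hmin c g Dc Dg hDc hDg hDcf hDcs hDgf hDgs 5 0 ?_ ?_ ?_
      · rw [show (5:ZMod 6)+1+1 = 1 by decide]
        exact hcg0.symm
      · rw [show (5:ZMod 6)+1 = 0 by decide, show (0:ZMod 5)+1 = 1 by decide]
        exact hcg1.symm
      · rw [show (0:ZMod 5)+1+1 = 2 by decide]
        exact e25
    by_cases e35 : c 3 = g 5
    · exact cne 2 3 (by decide) (e25.trans e35.symm)
    by_cases e42 : c 4 = g 2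
    · refine Paper.m3_helper9 E hmin c g Dc Dg hDc hDg hDcf hDcs hDgf hDgs 5 0 ?_ ?_ ?_
      · rw [show (5:ZMod 6)+1+1 = 1 by decide]
        exact hcg0.symm
      · rw [show (5:ZMod 6)+1 = 0 by decide, show (0:ZMod 5)+1 = 1 by decide]
        exact hcg1.symm
      · rw [show (0:ZMod 5)+1+1 = 2 by decide]
        exact e25
    by_cases e43 : c 4 = g 3
    · obtain ⟨w, hw, hwl, -⟩ := exists_cycle9 (c 3) [g 3, g 4, g 5] (by norm_num)
        (nodup4_9 (e33) (e34) (e35) (gne 3 4 (by decide)) (gne 3 5 (by decide)) (gne 4 5 (by decide)))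
        (List.Chain.cons ((by rw [← e43]; exact ac3)) (List.Chain.cons (ag3) (List.Chain.cons (ag4) (List.Chain.cons ((by rw [← e25]; exact ac2)) List.Chain.nil))))
      exact h4 _ w hw (by rw [hwl]; rfl)
    by_cases e44 : c 4 = g 4
    · obtain ⟨w, hw, hwl, -⟩ := exists_cycle9 (g 0) [g 1, g 4, g 5] (by norm_num)
        (nodup4_9 (gne 0 1 (by decide)) (gne 0 4 (by decide)) (gne 0 5 (by decide)) (gne 1 4 (by decide)) (gne 1 5 (by decide)) (gne 4 5 (by decide)))
        (List.Chain.cons (ag0) (List.Chain.cons ((by rw [← e44, ← hcg0]; exact ac4.symm)) (List.Chain.cons (ag4) (List.Chain.cons (ag5) List.Chain.nil))))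
      exact h4 _ w hw (by rw [hwl]; rfl)
    by_cases e45 : c 4 = g 5
    · exact cne 2 4 (by decide) (e25.trans e45.symm)
    obtain ⟨w, hw, hwl, -⟩ := exists_cycle9 (c 3) [c 4, g 1, g 2, g 3, g 4, g 5] (by norm_num)
      (nodup7_9 (cne 3 4 (by decide)) ((fun h => cne 3 0 (by decide) (h.trans hcg0.symm))) (e32) (e33) (e34) (e35) ((fun h => cne 4 0 (by decide) (h.trans hcg0.symm))) (e42) (e43) (e44) (e45) (gne 1 2 (by decide)) (gne 1 3 (by decide)) (gne 1 4 (by decide)) (gne 1 5 (by decide)) (gne 2 3 (by decide)) (gne 2 4 (by decide)) (gne 2 5 (by decide)) (gne 3 4 (by decide)) (gne 3 5 (by decide)) (gne 4 5 (by decide)))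
      (List.Chain.cons (ac3) (List.Chain.cons ((by rw [← hcg0]; exact ac4)) (List.Chain.cons (ag1) (List.Chain.cons (ag2) (List.Chain.cons (ag3) (List.Chain.cons (ag4) (List.Chain.cons ((by rw [← e25]; exact ac2)) List.Chain.nil)))))))
    exact h7 _ w hw (by rw [hwl]; rfl)
  by_cases e32 : c 3 = g 2
  · by_cases e42 : c 4 = g 2
    · exact cne 3 4 (by decide) (e32.trans e42.symm)
    by_cases e43 : c 4 = g 3
    · obtain ⟨w, hw, hwl, -⟩ := exists_cycle9 (c 2) [g 0, g 1, g 2] (by norm_num)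
        (nodup4_9 ((fun h => cne 2 1 (by decide) (h.trans hcg1.symm))) ((fun h => cne 2 0 (by decide) (h.trans hcg0.symm))) (e22) (gne 0 1 (by decide)) (gne 0 2 (by decide)) (gne 1 2 (by decide)))
        (List.Chain.cons ((by rw [← hcg1]; exact ac1.symm)) (List.Chain.cons (ag0) (List.Chain.cons (ag1) (List.Chain.cons ((by rw [← e32]; exact ac2.symm)) List.Chain.nil))))
      exact h4 _ w hw (by rw [hwl]; rfl)
    by_cases e44 : c 4 = g 4
    · obtain ⟨w, hw, hwl, -⟩ := exists_cycle9 (c 2) [g 0, g 1, g 2] (by norm_num)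
        (nodup4_9 ((fun h => cne 2 1 (by decide) (h.trans hcg1.symm))) ((fun h => cne 2 0 (by decide) (h.trans hcg0.symm))) (e22) (gne 0 1 (by decide)) (gne 0 2 (by decide)) (gne 1 2 (by decide)))
        (List.Chain.cons ((by rw [← hcg1]; exact ac1.symm)) (List.Chain.cons (ag0) (List.Chain.cons (ag1) (List.Chain.cons ((by rw [← e32]; exact ac2.symm)) List.Chain.nil))))
      exact h4 _ w hw (by rw [hwl]; rfl)
    by_cases e45 : c 4 = g 5
    · obtain ⟨w, hw, hwl, -⟩ := exists_cycle9 (c 2) [g 0, g 1, g 2] (by norm_num)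
        (nodup4_9 ((fun h => cne 2 1 (by decide) (h.trans hcg1.symm))) ((fun h => cne 2 0 (by decide) (h.trans hcg0.symm))) (e22) (gne 0 1 (by decide)) (gne 0 2 (by decide)) (gne 1 2 (by decide)))
        (List.Chain.cons ((by rw [← hcg1]; exact ac1.symm)) (List.Chain.cons (ag0) (List.Chain.cons (ag1) (List.Chain.cons ((by rw [← e32]; exact ac2.symm)) List.Chain.nil))))
      exact h4 _ w hw (by rw [hwl]; rfl)
    obtain ⟨w, hw, hwl, -⟩ := exists_cycle9 (c 2) [g 0, g 1, g 2] (by norm_num)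
      (nodup4_9 ((fun h => cne 2 1 (by decide) (h.trans hcg1.symm))) ((fun h => cne 2 0 (by decide) (h.trans hcg0.symm))) (e22) (gne 0 1 (by decide)) (gne 0 2 (by decide)) (gne 1 2 (by decide)))
      (List.Chain.cons ((by rw [← hcg1]; exact ac1.symm)) (List.Chain.cons (ag0) (List.Chain.cons (ag1) (List.Chain.cons ((by rw [← e32]; exact ac2.symm)) List.Chain.nil))))
    exact h4 _ w hw (by rw [hwl]; rfl)
  by_cases e33 : c 3 = g 3
  · by_cases e42 : c 4 = g 2
    · refine Paper.m3_helper9 E hmin c g Dc Dg hDc hDg hDcf hDcs hDgf hDgs 0 4 ?_ ?_ ?_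
      · rw [show (0:ZMod 6)+1+1 = 2 by decide]
        exact e42.symm
      · rw [show (0:ZMod 6)+1 = 1 by decide, show (4:ZMod 5)+1 = 0 by decide]
        exact hcg0.symm
      · rw [show (4:ZMod 5)+1+1 = 1 by decide]
        exact hcg1
    by_cases e43 : c 4 = g 3
    · exact cne 3 4 (by decide) (e33.trans e43.symm)
    by_cases e44 : c 4 = g 4
    · obtain ⟨w, hw, hwl, -⟩ := exists_cycle9 (g 0) [g 1, g 4, g 5] (by norm_num)
        (nodup4_9 (gne 0 1 (by decide)) (gne 0 4 (by decide)) (gne 0 5 (by decide)) (gne 1 4 (by decide)) (gne 1 5 (by decide)) (gne 4 5 (by decide)))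
        (List.Chain.cons (ag0) (List.Chain.cons ((by rw [← e44, ← hcg0]; exact ac4.symm)) (List.Chain.cons (ag4) (List.Chain.cons (ag5) List.Chain.nil))))
      exact h4 _ w hw (by rw [hwl]; rfl)
    by_cases e45 : c 4 = g 5
    · obtain ⟨w, hw, hwl, -⟩ := exists_cycle9 (c 2) [g 0, g 5, g 3] (by norm_num)
        (nodup4_9 ((fun h => cne 2 1 (by decide) (h.trans hcg1.symm))) (e25) (e23) (gne 0 5 (by decide)) (gne 0 3 (by decide)) (gne 5 3 (by decide)))
        (List.Chain.cons ((by rw [← hcg1]; exact ac1.symm)) (List.Chain.cons ((ag5).symm) (List.Chain.cons ((by rw [← e33, ← e45]; exact ac3.symm)) (List.Chain.cons ((by rw [← e33]; exact ac2.symm)) List.Chain.nil))))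
      exact h4 _ w hw (by rw [hwl]; rfl)
    obtain ⟨w, hw, hwl, -⟩ := exists_cycle9 (c 4) [g 1, g 2, g 3] (by norm_num)
      (nodup4_9 ((fun h => cne 4 0 (by decide) (h.trans hcg0.symm))) (e42) (e43) (gne 1 2 (by decide)) (gne 1 3 (by decide)) (gne 2 3 (by decide)))
      (List.Chain.cons ((by rw [← hcg0]; exact ac4)) (List.Chain.cons (ag1) (List.Chain.cons (ag2) (List.Chain.cons ((by rw [← e33]; exact ac3)) List.Chain.nil))))
    exact h4 _ w hw (by rw [hwl]; rfl)
  by_cases e34 : c 3 = g 4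
  · by_cases e42 : c 4 = g 2
    · obtain ⟨w, hw, hwl, -⟩ := exists_cycle9 (c 2) [g 0, g 5, g 4] (by norm_num)
        (nodup4_9 ((fun h => cne 2 1 (by decide) (h.trans hcg1.symm))) (e25) (e24) (gne 0 5 (by decide)) (gne 0 4 (by decide)) (gne 5 4 (by decide)))
        (List.Chain.cons ((by rw [← hcg1]; exact ac1.symm)) (List.Chain.cons ((ag5).symm) (List.Chain.cons ((ag4).symm) (List.Chain.cons ((by rw [← e34]; exact ac2.symm)) List.Chain.nil))))
      exact h4 _ w hw (by rw [hwl]; rfl)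
    by_cases e43 : c 4 = g 3
    · obtain ⟨w, hw, hwl, -⟩ := exists_cycle9 (c 2) [g 0, g 5, g 4] (by norm_num)
        (nodup4_9 ((fun h => cne 2 1 (by decide) (h.trans hcg1.symm))) (e25) (e24) (gne 0 5 (by decide)) (gne 0 4 (by decide)) (gne 5 4 (by decide)))
        (List.Chain.cons ((by rw [← hcg1]; exact ac1.symm)) (List.Chain.cons ((ag5).symm) (List.Chain.cons ((ag4).symm) (List.Chain.cons ((by rw [← e34]; exact ac2.symm)) List.Chain.nil))))
      exact h4 _ w hw (by rw [hwl]; rfl)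
    by_cases e44 : c 4 = g 4
    · exact cne 3 4 (by decide) (e34.trans e44.symm)
    by_cases e45 : c 4 = g 5
    · obtain ⟨w, hw, hwl, -⟩ := exists_cycle9 (c 2) [g 0, g 5, g 4] (by norm_num)
        (nodup4_9 ((fun h => cne 2 1 (by decide) (h.trans hcg1.symm))) (e25) (e24) (gne 0 5 (by decide)) (gne 0 4 (by decide)) (gne 5 4 (by decide)))
        (List.Chain.cons ((by rw [← hcg1]; exact ac1.symm)) (List.Chain.cons ((ag5).symm) (List.Chain.cons ((ag4).symm) (List.Chain.cons ((by rw [← e34]; exact ac2.symm)) List.Chain.nil))))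
      exact h4 _ w hw (by rw [hwl]; rfl)
    obtain ⟨w, hw, hwl, -⟩ := exists_cycle9 (c 2) [g 0, g 5, g 4] (by norm_num)
      (nodup4_9 ((fun h => cne 2 1 (by decide) (h.trans hcg1.symm))) (e25) (e24) (gne 0 5 (by decide)) (gne 0 4 (by decide)) (gne 5 4 (by decide)))
      (List.Chain.cons ((by rw [← hcg1]; exact ac1.symm)) (List.Chain.cons ((ag5).symm) (List.Chain.cons ((ag4).symm) (List.Chain.cons ((by rw [← e34]; exact ac2.symm)) List.Chain.nil))))
    exact h4 _ w hw (by rw [hwl]; rfl)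
  by_cases e35 : c 3 = g 5
  · by_cases e42 : c 4 = g 2
    · obtain ⟨w, hw, hwl, -⟩ := exists_cycle9 (g 0) [g 1, g 2, g 5] (by norm_num)
        (nodup4_9 (gne 0 1 (by decide)) (gne 0 2 (by decide)) (gne 0 5 (by decide)) (gne 1 2 (by decide)) (gne 1 5 (by decide)) (gne 2 5 (by decide)))
        (List.Chain.cons (ag0) (List.Chain.cons (ag1) (List.Chain.cons ((by rw [← e35, ← e42]; exact ac3.symm)) (List.Chain.cons (ag5) List.Chain.nil))))
      exact h4 _ w hw (by rw [hwl]; rfl)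
    by_cases e43 : c 4 = g 3
    · obtain ⟨w, hw, hwl, -⟩ := exists_cycle9 (g 0) [g 1, g 3, g 5] (by norm_num)
        (nodup4_9 (gne 0 1 (by decide)) (gne 0 3 (by decide)) (gne 0 5 (by decide)) (gne 1 3 (by decide)) (gne 1 5 (by decide)) (gne 3 5 (by decide)))
        (List.Chain.cons (ag0) (List.Chain.cons ((by rw [← e43, ← hcg0]; exact ac4.symm)) (List.Chain.cons ((by rw [← e35, ← e43]; exact ac3.symm)) (List.Chain.cons (ag5) List.Chain.nil))))
      exact h4 _ w hw (by rw [hwl]; rfl)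
    by_cases e44 : c 4 = g 4
    · obtain ⟨w, hw, hwl, -⟩ := exists_cycle9 (g 0) [g 1, g 4, g 5] (by norm_num)
        (nodup4_9 (gne 0 1 (by decide)) (gne 0 4 (by decide)) (gne 0 5 (by decide)) (gne 1 4 (by decide)) (gne 1 5 (by decide)) (gne 4 5 (by decide)))
        (List.Chain.cons (ag0) (List.Chain.cons ((by rw [← e44, ← hcg0]; exact ac4.symm)) (List.Chain.cons (ag4) (List.Chain.cons (ag5) List.Chain.nil))))
      exact h4 _ w hw (by rw [hwl]; rfl)
    by_cases e45 : c 4 = g 5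
    · exact cne 3 4 (by decide) (e35.trans e45.symm)
    obtain ⟨w, hw, hwl, -⟩ := exists_cycle9 (c 4) [g 1, g 0, g 5] (by norm_num)
      (nodup4_9 ((fun h => cne 4 0 (by decide) (h.trans hcg0.symm))) ((fun h => cne 4 1 (by decide) (h.trans hcg1.symm))) (e45) (gne 1 0 (by decide)) (gne 1 5 (by decide)) (gne 0 5 (by decide)))
      (List.Chain.cons ((by rw [← hcg0]; exact ac4)) (List.Chain.cons ((ag0).symm) (List.Chain.cons ((ag5).symm) (List.Chain.cons ((by rw [← e35]; exact ac3)) List.Chain.nil))))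
    exact h4 _ w hw (by rw [hwl]; rfl)
  by_cases e42 : c 4 = g 2
  · obtain ⟨w, hw, hwl, -⟩ := exists_cycle9 (c 2) [c 3, g 2, g 3, g 4, g 5, g 0] (by norm_num)
      (nodup7_9 (cne 2 3 (by decide)) (e22) (e23) (e24) (e25) ((fun h => cne 2 1 (by decide) (h.trans hcg1.symm))) (e32) (e33) (e34) (e35) ((fun h => cne 3 1 (by decide) (h.trans hcg1.symm))) (gne 2 3 (by decide)) (gne 2 4 (by decide)) (gne 2 5 (by decide)) (gne 2 0 (by decide)) (gne 3 4 (by decide)) (gne 3 5 (by decide)) (gne 3 0 (by decide)) (gne 4 5 (by decide)) (gne 4 0 (by decide)) (gne 5 0 (by decide)))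
      (List.Chain.cons (ac2) (List.Chain.cons ((by rw [← e42]; exact ac3)) (List.Chain.cons (ag2) (List.Chain.cons (ag3) (List.Chain.cons (ag4) (List.Chain.cons (ag5) (List.Chain.cons ((by rw [← hcg1]; exact ac1)) List.Chain.nil)))))))
    exact h7 _ w hw (by rw [hwl]; rfl)
  by_cases e43 : c 4 = g 3
  · obtain ⟨w5, hw5, hl5, hsup5⟩ := exists_cycle9 (g 1) [g 3, c 3, c 2, g 0] (by norm_num)
      (nodup5_9 (gne 1 3 (by decide)) (Ne.symm ((fun h => cne 3 0 (by decide) (h.trans hcg0.symm)))) (Ne.symm ((fun h => cne 2 0 (by decide) (h.trans hcg0.symm)))) (gne 1 0 (by decide)) (Ne.symm (e33)) (Ne.symm (e23)) (gne 3 0 (by decide)) (cne 3 2 (by decide)) ((fun h => cne 3 1 (by decide) (h.trans hcg1.symm))) ((fun h => cne 2 1 (by decide) (h.trans hcg1.symm))))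
      (List.Chain.cons ((by rw [← e43, ← hcg0]; exact ac4.symm)) (List.Chain.cons ((by rw [← e43]; exact ac3.symm)) (List.Chain.cons ((ac2).symm) (List.Chain.cons ((by rw [← hcg1]; exact ac1.symm)) (List.Chain.cons (ag0) List.Chain.nil)))))
    obtain ⟨w3, hw3, hl3, hsup3⟩ := exists_cycle9 (g 1) [g 3, g 2] (by norm_num)
      (nodup3_9 (gne 1 3 (by decide)) (gne 1 2 (by decide)) (gne 3 2 (by decide)))
      (List.Chain.cons ((by rw [← e43, ← hcg0]; exact ac4.symm)) (List.Chain.cons ((ag2).symm) (List.Chain.cons ((ag1).symm) List.Chain.nil)))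
    refine h53 (g 1) (g 1) w5 w3 hw5 (by rw [hl5]; rfl) hw3 (by rw [hl3]; rfl)
      ⟨g 1, g 3, gne 1 3 (by decide), ?_, ?_, ?_⟩
    · exact first_edge_mem9 w5 [c 3, c 2, g 0, g 1] (by rw [hsup5]; rfl)
    · exact first_edge_mem9 w3 [g 2, g 1] (by rw [hsup3]; rfl)
    · intro z
      rw [hsup5, hsup3]
      simp only [List.cons_append, List.nil_append, List.mem_cons, List.not_mem_nil,
        or_false]
      constructor
      · rintro ⟨hz5, hz3⟩
        rcases hz3 with rfl | rfl | rfl | rfl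
        · left; rfl
        · right; rfl
        · rcases hz5 with h | h | h | h | h | h
          · exact absurd h (gne 2 1 (by decide))
          · exact absurd h (gne 2 3 (by decide))
          · exact absurd h (Ne.symm (e32))
          · exact absurd h (Ne.symm (e22))
          · exact absurd h (gne 2 0 (by decide))
          · exact absurd h (gne 2 1 (by decide))
        · left; rfl
      · rintro (rfl | rfl)
        · exact ⟨Or.inl rfl, Or.inl rfl⟩
        · exact ⟨Or.inr (Or.inl rfl), Or.inr (Or.inl rfl)⟩
  by_cases e44 : c 4 = g 4
  · obtain ⟨w, hw, hwl, -⟩ := exists_cycle9 (g 0) [g 1, g 4, g 5] (by norm_num)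
      (nodup4_9 (gne 0 1 (by decide)) (gne 0 4 (by decide)) (gne 0 5 (by decide)) (gne 1 4 (by decide)) (gne 1 5 (by decide)) (gne 4 5 (by decide)))
      (List.Chain.cons (ag0) (List.Chain.cons ((by rw [← e44, ← hcg0]; exact ac4.symm)) (List.Chain.cons (ag4) (List.Chain.cons (ag5) List.Chain.nil))))
    exact h4 _ w hw (by rw [hwl]; rfl)
  by_cases e45 : c 4 = g 5
  · obtain ⟨w, hw, hwl, -⟩ := exists_cycle9 (c 2) [c 3, g 5, g 0] (by norm_num)
      (nodup4_9 (cne 2 3 (by decide)) (e25) ((fun h => cne 2 1 (by decide) (h.trans hcg1.symm))) (e35) ((fun h => cne 3 1 (by decide) (h.trans hcg1.symm))) (gne 5 0 (by decide)))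
      (List.Chain.cons (ac2) (List.Chain.cons ((by rw [← e45]; exact ac3)) (List.Chain.cons (ag5) (List.Chain.cons ((by rw [← hcg1]; exact ac1)) List.Chain.nil))))
    exact h4 _ w hw (by rw [hwl]; rfl)
  obtain ⟨w, hw, hwl, -⟩ := exists_cycle9 (c 2) [c 3, c 4, g 1, g 2, g 3, g 4, g 5, g 0] (by norm_num)
    (nodup9_9 (cne 2 3 (by decide)) (cne 2 4 (by decide)) ((fun h => cne 2 0 (by decide) (h.trans hcg0.symm))) (e22) (e23) (e24) (e25) ((fun h => cne 2 1 (by decide) (h.trans hcg1.symm))) (cne 3 4 (by decide)) ((fun h => cne 3 0 (by decide) (h.trans hcg0.symm))) (e32) (e33) (e34) (e35) ((fun h => cne 3 1 (by decide) (h.trans hcg1.symm))) ((fun h => cne 4 0 (by decide) (h.trans hcg0.symm))) (e42) (e43) (e44) (e45) ((fun h => cne 4 1 (by decide) (h.trans hcg1.symm))) (gne 1 2 (by decide)) (gne 1 3 (by decide)) (gne 1 4 (by decide)) (gne 1 5 (by decide)) (gne 1 0 (by decide)) (gne 2 3 (by decide)) (gne 2 4 (by decide)) (gne 2 5 (by decide))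 (gne 2 0 (by decide)) (gne 3 4 (by decide)) (gne 3 5 (by decide)) (gne 3 0 (by decide)) (gne 4 5 (by decide)) (gne 4 0 (by decide)) (gne 5 0 (by decide)))
    (List.Chain.cons (ac2) (List.Chain.cons (ac3) (List.Chain.cons ((by rw [← hcg0]; exact ac4)) (List.Chain.cons (ag1) (List.Chain.cons (ag2) (List.Chain.cons (ag3) (List.Chain.cons (ag4) (List.Chain.cons (ag5) (List.Chain.cons ((by rw [← hcg1]; exact ac1)) List.Chain.nil)))))))))
  exact h9 _ w hw (by rw [hwl]; rfl)


end Paper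

end Assembly9

section Final9

open SimpleGraph

theorem statement9' {V : Type*} [Fintype V] (G : SimpleGraph V) [DecidableRel G.Adj]
    (E : Paper.PlaneEmbedding G)
    (hmin : ∀ v : V, 3 ≤ G.degree v)
    (h4 : Paper.NoCycleLen G 4) (h7 : Paper.NoCycleLen G 7)
    (h9 : Paper.NoCycleLen G 9) (h53 : Paper.No5CycleNormAdj3 G) :
    ∀ d1 d2 : G.Dart, Paper.faceSize E d1 = 5 → Paper.faceSize E d2 = 6 →
      ¬ Paper.FacesAdjacent E d1 d2 := by
  intro d1 d2 h5 h6 hadj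
  obtain ⟨e1, e2, s1, s2, he⟩ := hadj
  have h5' : Paper.faceSize E e1 = 5 := by rw [← Paper.faceSize_congr9 E s1]; exact h5
  have h6' : Paper.faceSize E e2 = 6 := by rw [← Paper.faceSize_congr9 E s2]; exact h6
  rcases (SimpleGraph.dart_edge_eq_iff e1 e2).mp he with rfl | rfl
  · rw [h5'] at h6'
    norm_num at h6'
  · -- e1 = e2.symm
    have hdeg2 : ∀ v : V, 2 ≤ G.degree v := fun v => le_trans (by norm_num) (hmin v)
    obtain ⟨Dc, c, hDc0, hDc, hDcf, hDcs, hac, hcne1, hcne2⟩ :=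
      Paper.exists_boundary9 E hdeg2 e2.symm 5 (by norm_num) h5'
    obtain ⟨Dg, g, hDg0, hDg, hDgf, hDgs, hag, hgne1, hgne2⟩ :=
      Paper.exists_boundary9 E hdeg2 e2 6 (by norm_num) h6'
    have hcinj : Function.Injective c := inj_five9 c hcne1 hcne2
    have hcg0 : c 0 = g 1 := by
      rw [← hDcf 0, hDc0]
      have h01 : (0 : ZMod 6) + 1 = 1 := by decide
      rw [← h01, ← hDgs 0, hDg0]
      rfl
    have hcg1 : c 1 = g 0 := by
      have h01 : (0 : ZMod 5) + 1 = 1 := by decide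
      rw [← h01, ← hDcs 0, hDc0, ← hDgf 0, hDg0]
      rfl
    have ac0 : G.Adj (c 0) (c 1) := by have h := hac 0; rwa [show (0:ZMod 5)+1 = 1 by decide] at h
    have ac1 : G.Adj (c 1) (c 2) := by have h := hac 1; rwa [show (1:ZMod 5)+1 = 2 by decide] at h
    have ac2 : G.Adj (c 2) (c 3) := by have h := hac 2; rwa [show (2:ZMod 5)+1 = 3 by decide] at h
    have ac3 : G.Adj (c 3) (c 4) := by have h := hac 3; rwa [show (3:ZMod 5)+1 = 4 by decide] at h
    have ac4 : G.Adj (c 4) (c 0) := by have h := hac 4; rwa [show (4:ZMod 5)+1 = 0 by decide] at h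
    have cne : ∀ i j : ZMod 5, i ≠ j → c i ≠ c j := fun i j hij h => hij (hcinj h)
    rcases six_cases9 g hgne1 hgne2 with hginj | ⟨i0, hi0⟩
    · exact Paper.bigcase9 E hmin h4 h7 h9 h53 c g Dc Dg hDc hDg hDcf hDcs hDgf hDgs
        hcinj hginj hcg0 hcg1
    · -- the 6-face boundary walk is two triangles joined at a vertex
      have htri : ∃ s : V, G.Adj (g 0) s ∧ G.Adj (g 1) s ∧ s ≠ g 0 ∧ s ≠ g 1 := by
        have hsix : ∀ m : ZMod 6, m = 0 ∨ m = 1 ∨ m = 2 ∨ m = 3 ∨ m = 4 ∨ m = 5 := by decide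
        rcases hsix i0 with rfl | rfl | rfl | rfl | rfl | rfl
        · rw [show (0:ZMod 6)+3 = 3 by decide] at hi0
          refine ⟨g 2, ?_, ?_, ?_, ?_⟩
          · have h := hag 2
            rw [show (2:ZMod 6)+1 = 3 by decide, ← hi0] at h
            exact h.symm
          · have h := hag 1
            rwa [show (1:ZMod 6)+1 = 2 by decide] at h
          · have h := hgne2 0
            rw [show (0:ZMod 6)+2 = 2 by decide] at h
            exact h.symm
          · have h := hgne1 1
            rw [show (1:ZMod 6)+1 = 2 by decide] at h
            exact h.symm
        · rw [show (1:ZMod 6)+3 = 4 by decide] at hi0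
          refine ⟨g 5, ?_, ?_, ?_, ?_⟩
          · have h := hag 5
            rw [show (5:ZMod 6)+1 = 0 by decide] at h
            exact h.symm
          · have h := hag 4
            rw [show (4:ZMod 6)+1 = 5 by decide, ← hi0] at h
            exact h
          · have h := hgne1 5
            rwa [show (5:ZMod 6)+1 = 0 by decide] at h
          · rw [hi0]
            have h := hgne1 4
            rw [show (4:ZMod 6)+1 = 5 by decide] at h
            exact h.symm
        · rw [show (2:ZMod 6)+3 = 5 by decide] at hi0
          refine ⟨g 2, ?_, ?_, ?_, ?_⟩
          · have h := hag 5
            rw [show (5:ZMod 6)+1 = 0 by decide, ← hi0] at h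
            exact h.symm
          · have h := hag 1
            rwa [show (1:ZMod 6)+1 = 2 by decide] at h
          · have h := hgne2 0
            rw [show (0:ZMod 6)+2 = 2 by decide] at h
            exact h.symm
          · have h := hgne1 1
            rw [show (1:ZMod 6)+1 = 2 by decide] at h
            exact h.symm
        · rw [show (3:ZMod 6)+3 = 0 by decide] at hi0
          refine ⟨g 2, ?_, ?_, ?_, ?_⟩
          · have h := hag 2
            rw [show (2:ZMod 6)+1 = 3 by decide, hi0] at h
            exact h.symm
          · have h := hag 1
            rwa [show (1:ZMod 6)+1 = 2 by decide] at h
          · have h := hgne2 0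
            rw [show (0:ZMod 6)+2 = 2 by decide] at h
            exact h.symm
          · have h := hgne1 1
            rw [show (1:ZMod 6)+1 = 2 by decide] at h
            exact h.symm
        · rw [show (4:ZMod 6)+3 = 1 by decide] at hi0
          refine ⟨g 5, ?_, ?_, ?_, ?_⟩
          · have h := hag 5
            rw [show (5:ZMod 6)+1 = 0 by decide] at h
            exact h.symm
          · have h := hag 4
            rw [show (4:ZMod 6)+1 = 5 by decide, hi0] at h
            exact h
          · have h := hgne1 5
            rwa [show (5:ZMod 6)+1 = 0 by decide] at h
          · rw [← hi0]
            have h := hgne1 4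
            rw [show (4:ZMod 6)+1 = 5 by decide] at h
            exact h.symm
        · rw [show (5:ZMod 6)+3 = 2 by decide] at hi0
          refine ⟨g 2, ?_, ?_, ?_, ?_⟩
          · have h := hag 5
            rw [show (5:ZMod 6)+1 = 0 by decide, hi0] at h
            exact h.symm
          · have h := hag 1
            rwa [show (1:ZMod 6)+1 = 2 by decide] at h
          · have h := hgne2 0
            rw [show (0:ZMod 6)+2 = 2 by decide] at h
            exact h.symm
          · have h := hgne1 1
            rw [show (1:ZMod 6)+1 = 2 by decide] at h
            exact h.symm
      obtain ⟨sv, hA0, hA1, hN0, hN1⟩ := htri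
      have sAdjC0 : G.Adj (c 0) sv := by rw [hcg0]; exact hA1
      have sAdjC1 : G.Adj (c 1) sv := by rw [hcg1]; exact hA0
      have sNeC0 : sv ≠ c 0 := by rw [hcg0]; exact hN1
      have sNeC1 : sv ≠ c 1 := by rw [hcg1]; exact hN0
      by_cases hs2 : sv = c 2
      · obtain ⟨w, hw, hwl, -⟩ := exists_cycle9 (c 0) [c 2, c 3, c 4] (by norm_num)
          (List.nodup_cons.mpr ⟨by simp [cne 0 2 (by decide), cne 0 3 (by decide),
              cne 0 4 (by decide)],
            nodup3_9 (cne 2 3 (by decide)) (cne 2 4 (by decide)) (cne 3 4 (by decide))⟩)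
          (List.Chain.cons (hs2 ▸ sAdjC0) (List.Chain.cons ac2 (List.Chain.cons ac3
            (List.Chain.cons ac4 List.Chain.nil))))
        exact h4 _ w hw (by rw [hwl]; rfl)
      by_cases hs3 : sv = c 3
      · obtain ⟨w, hw, hwl, -⟩ := exists_cycle9 (c 0) [c 1, c 2, c 3] (by norm_num)
          (List.nodup_cons.mpr ⟨by simp [cne 0 1 (by decide), cne 0 2 (by decide),
              cne 0 3 (by decide)],
            nodup3_9 (cne 1 2 (by decide)) (cne 1 3 (by decide)) (cne 2 3 (by decide))⟩)
          (List.Chain.cons ac0 (List.Chain.cons ac1 (List.Chain.cons ac2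
            (List.Chain.cons (hs3 ▸ sAdjC0).symm List.Chain.nil))))
        exact h4 _ w hw (by rw [hwl]; rfl)
      by_cases hs4 : sv = c 4
      · obtain ⟨w, hw, hwl, -⟩ := exists_cycle9 (c 1) [c 2, c 3, c 4] (by norm_num)
          (List.nodup_cons.mpr ⟨by simp [cne 1 2 (by decide), cne 1 3 (by decide),
              cne 1 4 (by decide)],
            nodup3_9 (cne 2 3 (by decide)) (cne 2 4 (by decide)) (cne 3 4 (by decide))⟩)
          (List.Chain.cons ac1 (List.Chain.cons ac2 (List.Chain.cons ac3
            (List.Chain.cons (hs4 ▸ sAdjC1).symm List.Chain.nil))))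
        exact h4 _ w hw (by rw [hwl]; rfl)
      · obtain ⟨w5, hw5, hl5, hsup5⟩ := exists_cycle9 (c 0) [c 1, c 2, c 3, c 4] (by norm_num)
          (List.nodup_cons.mpr ⟨by simp [cne 0 1 (by decide), cne 0 2 (by decide),
              cne 0 3 (by decide), cne 0 4 (by decide)],
            nodup4_9 (cne 1 2 (by decide)) (cne 1 3 (by decide)) (cne 1 4 (by decide))
              (cne 2 3 (by decide)) (cne 2 4 (by decide)) (cne 3 4 (by decide))⟩)
          (List.Chain.cons ac0 (List.Chain.cons ac1 (List.Chain.cons ac2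
            (List.Chain.cons ac3 (List.Chain.cons ac4 List.Chain.nil)))))
        obtain ⟨w3, hw3, hl3, hsup3⟩ := exists_cycle9 (c 0) [c 1, sv] (by norm_num)
          (nodup3_9 (cne 0 1 (by decide)) sNeC0.symm sNeC1.symm)
          (List.Chain.cons ac0 (List.Chain.cons sAdjC1 (List.Chain.cons sAdjC0.symm
            List.Chain.nil)))
        refine h53 (c 0) (c 0) w5 w3 hw5 (by rw [hl5]; rfl) hw3 (by rw [hl3]; rfl)
          ⟨c 0, c 1, cne 0 1 (by decide), ?_, ?_, ?_⟩
        · exact first_edge_mem9 w5 [c 2, c 3, c 4, c 0] (by rw [hsup5]; rfl)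
        · exact first_edge_mem9 w3 [sv, c 0] (by rw [hsup3]; rfl)
        · intro z
          rw [hsup5, hsup3]
          simp only [List.cons_append, List.nil_append, List.mem_cons, List.not_mem_nil,
            or_false]
          constructor
          · rintro ⟨hz5, hz3⟩
            rcases hz3 with rfl | rfl | rfl | rfl
            · left; rfl
            · right; rfl
            · rcases hz5 with h | h | h | h | h | h
              · exact absurd h sNeC0
              · exact absurd h sNeC1
              · exact absurd h hs2
              · exact absurd h hs3
              · exact absurd h hs4
              · exact absurd h sNeC0
            · left; rfl
          · rintro (rfl | rfl)
            · exact ⟨Or.inl rfl, Or.inl rfl⟩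
            · exact ⟨Or.inr (Or.inl rfl), Or.inr (Or.inl rfl)⟩

end Final9


open SimpleGraph

/-- No 5-face is adjacent to a 6-face. -/
theorem statement9 {V : Type*} [Fintype V] (G : SimpleGraph V) [DecidableRel G.Adj]
    (hconn : G.Connected)
    (E : Paper.PlaneEmbedding G) (hE : E.IsPlane)
    (hmin : ∀ v : V, 3 ≤ G.degree v)
    (h4 : Paper.NoCycleLen G 4) (h7 : Paper.NoCycleLen G 7)
    (h9 : Paper.NoCycleLen G 9) (h53 : Paper.No5CycleNormAdj3 G) :
    ∀ d1 d2 : G.Dart, Paper.faceSize E d1 = 5 → Paper.faceSize E d2 = 6 →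
      ¬ Paper.FacesAdjacent E d1 d2 :=
  statement9' G E hmin h4 h7 h9 h53
end

section
/- Let G be a connected plane graph with minimum degree at least 3 that contains no cycle of length 4, no cycle of length 7, no cycle of length 9, and no 5-cycle normally adjacent to a 3-cycle. Then any two adjacent 5-faces of G are normally adjacent, i.e., their bounding 5-cycles share exactly one edge together with its two endpoints. -/
open SimpleGraph

namespace Aux
open Paper

set_option linter.unusedSectionVars false

variable {V : Type*} [Fintype V] [DecidableEq V] {G : SimpleGraph V} [DecidableRel G.Adj]

lemma facePerm_apply (E : Paper.PlaneEmbedding G) (e : G.Dart) :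
    E.facePerm e = E.rot e.symm := rfl

lemma facePerm_fst (E : Paper.PlaneEmbedding G) (e : G.Dart) :
    (E.facePerm e).fst = e.snd := by
  rw [facePerm_apply, E.fst_rot]; rfl

lemma rot_ne (E : Paper.PlaneEmbedding G) (hmin : ∀ v : V, 3 ≤ G.degree v) (e : G.Dart) :
    E.rot e ≠ e := by
  intro h
  have hfix : Function.IsFixedPt E.rot e := h
  have hall : ∀ g : G.Dart, g.fst = e.fst → g = e := by
    intro g hg
    obtain ⟨n, hn⟩ := E.rot_cyclic e g hg.symm
    rw [hfix.perm_zpow n] at hn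
    exact hn.symm
  have h2 : G.neighborFinset e.fst ⊆ {e.snd} := by
    intro u hu
    have := hall ⟨(e.fst, u), (G.mem_neighborFinset _ _).mp hu⟩ rfl
    simp only [Finset.mem_singleton]
    exact (congrArg (fun d : G.Dart => d.toProd.2) this).symm ▸ rfl
  have h3 : G.degree e.fst ≤ 1 := by
    rw [← SimpleGraph.card_neighborFinset_eq_degree]
    exact (Finset.card_le_card h2).trans (by simp)
  have h4 := hmin e.fst
  omega

lemma no_backtrack (E : Paper.PlaneEmbedding G) (hmin : ∀ v : V, 3 ≤ G.degree v) (e : G.Dart) :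
    E.facePerm e ≠ e.symm := by
  rw [facePerm_apply]
  exact rot_ne E hmin e.symm

lemma rot_two_cycle (E : Paper.PlaneEmbedding G) (hmin : ∀ v : V, 3 ≤ G.degree v)
    {A B : G.Dart} (hfst : A.fst = B.fst) (hne : A ≠ B)
    (h1 : E.rot A = B) (h2 : E.rot B = A) : False := by
  have hsub : ¬ (G.neighborFinset A.fst ⊆ {A.snd, B.snd}) := by
    intro h
    have h3 : G.degree A.fst ≤ 2 := by
      rw [← SimpleGraph.card_neighborFinset_eq_degree]
      exact (Finset.card_le_card h).trans (Finset.card_insert_le _ _ |>.trans (by simp))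
    have h4 := hmin A.fst
    omega
  obtain ⟨u, hu, hu2⟩ := Finset.not_subset.mp hsub
  have hadj : G.Adj A.fst u := (G.mem_neighborFinset _ _).mp hu
  have hpow : ∀ n : ℕ, (E.rot ^ n) A = A ∨ (E.rot ^ n) A = B := by
    intro n
    induction n with
    | zero => left; rfl
    | succ k ih =>
      rw [pow_succ', Equiv.Perm.mul_apply]
      rcases ih with h | h
      · rw [h, h1]; right; rfl
      · rw [h, h2]; left; rfl
  have hsc := E.rot_cyclic A ⟨(A.fst, u), hadj⟩ rfl
  obtain ⟨i, _, hi⟩ := hsc.exists_pow_eq'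
  apply hu2
  simp only [Finset.mem_insert, Finset.mem_singleton]
  rcases hpow i with h | h <;> rw [h] at hi
  · exact Or.inl (congrArg (fun d : G.Dart => d.toProd.2) hi).symm
  · exact Or.inr (congrArg (fun d : G.Dart => d.toProd.2) hi).symm

lemma orbit5 {α : Type*} [Fintype α] [DecidableEq α] (f : Equiv.Perm α) (d : α)
    (h : {e | f.SameCycle d e}.ncard = 5) :
    (f ^ 5) d = d ∧ ∀ g, f.SameCycle d g ↔ ∃ i < 5, (f ^ i) d = g := by
  have hper : d ∈ Function.periodicPts f := by
    refine Function.mk_mem_periodicPts (orderOf_pos f) ?_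
    show f^[orderOf f] d = d
    rw [← Equiv.Perm.coe_pow, pow_orderOf_eq_one]; rfl
  set m := Function.minimalPeriod f d with hm
  have hmpos : 0 < m := Function.minimalPeriod_pos_of_mem_periodicPts hper
  have hchar : ∀ g, f.SameCycle d g ↔ ∃ i < m, (f ^ i) d = g := by
    intro g
    constructor
    · intro hg
      obtain ⟨i, _, rfl⟩ := hg.exists_pow_eq'
      refine ⟨i % m, Nat.mod_lt _ hmpos, ?_⟩
      exact Function.iterate_mod_minimalPeriod_eq (f := f) (x := d) (n := i)
    · rintro ⟨i, _, rfl⟩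
      exact ⟨(i : ℤ), by rw [zpow_natCast]⟩
  have hset : {e | f.SameCycle d e} =
      ↑(((List.range m).map fun n => (f ^ n) d).toFinset) := by
    ext g
    simp only [Set.mem_setOf_eq, List.coe_toFinset, List.mem_map, List.mem_range,
      Set.mem_setOf_eq, hchar]
  have hnodup : ((List.range m).map fun n => (f ^ n) d).Nodup := by
    have h2 := Function.nodup_periodicOrbit (f := ⇑f) (x := d)
    rw [Function.periodicOrbit_def, Cycle.nodup_coe_iff] at h2
    exact h2
  have hcard : {e | f.SameCycle d e}.ncard = m := by
    rw [hset, Set.ncard_coe_finset, List.toFinset_card_of_nodup hnodup]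
    simp
  have hm5 : m = 5 := by omega
  refine ⟨?_, by simpa [hm5] using hchar⟩
  have h3 := Function.isPeriodicPt_minimalPeriod f d
  rw [← hm, hm5] at h3
  rw [Equiv.Perm.coe_pow]; exact h3

lemma face5 (E : Paper.PlaneEmbedding G) (hmin : ∀ v : V, 3 ≤ G.degree v)
    {d D : G.Dart} (h5 : Paper.faceSize E d = 5) (hD : E.facePerm.SameCycle d D) :
    ∃ a b c : V,
      (E.facePerm ^ 5) D = D ∧
      (E.facePerm D).toProd = (D.snd, a) ∧
      ((E.facePerm ^ 2) D).toProd = (a, b) ∧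
      ((E.facePerm ^ 3) D).toProd = (b, c) ∧
      ((E.facePerm ^ 4) D).toProd = (c, D.fst) ∧
      ([D.fst, D.snd, a, b, c] : List V).Nodup ∧
      (∀ g, E.facePerm.SameCycle d g →
        g = D ∨ g = E.facePerm D ∨ g = (E.facePerm ^ 2) D ∨ g = (E.facePerm ^ 3) D ∨
          g = (E.facePerm ^ 4) D) := by
  have h5' : {e | E.facePerm.SameCycle D e}.ncard = 5 := by
    have hss : {e | E.facePerm.SameCycle D e} = {e | E.facePerm.SameCycle d e} :=
      Set.ext fun g => ⟨fun h => hD.trans h, fun h => (hD.symm).trans h⟩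
    rw [hss]
    simpa [Paper.faceSize, Paper.faceOf] using h5
  obtain ⟨hpow, hchar⟩ := orbit5 E.facePerm D h5'
  set f := E.facePerm with hf
  have hD2 : (f ^ 2) D = f (f D) := by rw [pow_succ', Equiv.Perm.mul_apply, pow_one]
  have hD3 : (f ^ 3) D = f ((f ^ 2) D) := by rw [pow_succ', Equiv.Perm.mul_apply]
  have hD4 : (f ^ 4) D = f ((f ^ 3) D) := by rw [pow_succ', Equiv.Perm.mul_apply]
  have hD5 : (f ^ 5) D = f ((f ^ 4) D) := by rw [pow_succ', Equiv.Perm.mul_apply]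
  refine ⟨(f D).snd, ((f ^ 2) D).snd, ((f ^ 3) D).snd, hpow, ?_, ?_, ?_, ?_, ?_, ?_⟩
  · exact Prod.ext (facePerm_fst E D) rfl
  · exact Prod.ext (by rw [hD2]; exact facePerm_fst E (f D)) rfl
  · exact Prod.ext (by rw [hD3]; exact facePerm_fst E ((f ^ 2) D)) rfl
  · refine Prod.ext (by rw [hD4]; exact facePerm_fst E ((f ^ 3) D)) ?_
    show ((f ^ 4) D).snd = D.fst
    have := facePerm_fst E ((f ^ 4) D)
    rw [← hD5, hpow] at this
    exact this.symm
  · -- Nodup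
    set a := (f D).snd
    set b := ((f ^ 2) D).snd
    set c := ((f ^ 3) D).snd
    have eq1 : (f D).toProd = (D.snd, a) := Prod.ext (facePerm_fst E D) rfl
    have eq2 : ((f ^ 2) D).toProd = (a, b) :=
      Prod.ext (by rw [hD2]; exact facePerm_fst E (f D)) rfl
    have eq3 : ((f ^ 3) D).toProd = (b, c) :=
      Prod.ext (by rw [hD3]; exact facePerm_fst E ((f ^ 2) D)) rfl
    have eq4 : ((f ^ 4) D).toProd = (c, D.fst) := by
      refine Prod.ext (by rw [hD4]; exact facePerm_fst E ((f ^ 3) D)) ?_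
      show ((f ^ 4) D).snd = D.fst
      have := facePerm_fst E ((f ^ 4) D)
      rw [← hD5, hpow] at this
      exact this.symm
    have adj0 : G.Adj D.fst D.snd := D.adj
    have adj1 : G.Adj D.snd a := by have h := (f D).adj; rw [eq1] at h; exact h
    have adj2 : G.Adj a b := by have h := ((f ^ 2) D).adj; rw [eq2] at h; exact h
    have adj3 : G.Adj b c := by have h := ((f ^ 3) D).adj; rw [eq3] at h; exact h
    have adj4 : G.Adj c D.fst := by have h := ((f ^ 4) D).adj; rw [eq4] at h; exact h
    have n_xa : D.fst ≠ a := by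
      intro h
      refine no_backtrack E hmin D (SimpleGraph.Dart.ext _ _ ?_)
      rw [eq1, ← h]
      rfl
    have n_yb : D.snd ≠ b := by
      intro h
      refine no_backtrack E hmin (f D) ?_
      have hb : E.facePerm (f D) = (f ^ 2) D := hD2.symm
      rw [hb]
      refine SimpleGraph.Dart.ext _ _ ?_
      rw [eq2, SimpleGraph.Dart.symm_toProd, eq1, ← h]
      rfl
    have n_ac : a ≠ c := by
      intro h
      refine no_backtrack E hmin ((f ^ 2) D) ?_
      have hb : E.facePerm ((f ^ 2) D) = (f ^ 3) D := hD3.symm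
      rw [hb]
      refine SimpleGraph.Dart.ext _ _ ?_
      rw [eq3, SimpleGraph.Dart.symm_toProd, eq2, ← h]
      rfl
    have n_bx : b ≠ D.fst := by
      intro h
      refine no_backtrack E hmin ((f ^ 3) D) ?_
      have hb : E.facePerm ((f ^ 3) D) = (f ^ 4) D := hD4.symm
      rw [hb]
      refine SimpleGraph.Dart.ext _ _ ?_
      rw [eq4, SimpleGraph.Dart.symm_toProd, eq3, ← h]
      rfl
    have n_cy : c ≠ D.snd := by
      intro h
      refine no_backtrack E hmin ((f ^ 4) D) ?_
      have hb : E.facePerm ((f ^ 4) D) = D := by rw [← hD5]; exact hpow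
      rw [hb]
      refine SimpleGraph.Dart.ext _ _ ?_
      rw [SimpleGraph.Dart.symm_toProd, eq4, Prod.swap_prod_mk]
      exact Prod.ext rfl h.symm
    have n_xy := adj0.ne
    have n_ya := adj1.ne
    have n_ab := adj2.ne
    have n_bc := adj3.ne
    have n_cx := adj4.ne
    simp only [List.nodup_cons, List.mem_cons, List.not_mem_nil, or_false,
      List.mem_singleton, List.nodup_nil, and_true, not_or]
    exact ⟨⟨n_xy, n_xa, fun h => n_bx h.symm, fun h => n_cx h.symm⟩,
      ⟨n_ya, n_yb, fun h => n_cy h.symm⟩, ⟨n_ab, n_ac⟩, n_bc, not_false⟩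
  · intro g hg
    obtain ⟨i, hi, hie⟩ := (hchar g).mp (hD.symm.trans hg)
    interval_cases i
    · exact Or.inl (by simpa using hie.symm)
    · exact Or.inr (Or.inl (by simpa using hie.symm))
    · exact Or.inr (Or.inr (Or.inl hie.symm))
    · exact Or.inr (Or.inr (Or.inr (Or.inl hie.symm)))
    · exact Or.inr (Or.inr (Or.inr (Or.inr hie.symm)))

lemma cycle4 {p q r s : V}
    (h1 : G.Adj p q) (h2 : G.Adj q r) (h3 : G.Adj r s) (h4 : G.Adj s p)
    (npr : p ≠ r) (nqs : q ≠ s) :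
    ∃ w : G.Walk p p, w.IsCycle ∧ w.length = 4 := by
  refine ⟨SimpleGraph.Walk.cons h1 (SimpleGraph.Walk.cons h2 (SimpleGraph.Walk.cons h3
    (SimpleGraph.Walk.cons h4 SimpleGraph.Walk.nil))), ?_, rfl⟩
  have n1 := h1.ne
  have n2 := h2.ne
  have n3 := h3.ne
  have n4 := h4.ne
  rw [SimpleGraph.Walk.isCycle_def]
  refine ⟨?_, by simp, ?_⟩
  · rw [SimpleGraph.Walk.isTrail_def]
    simp only [SimpleGraph.Walk.edges_cons, SimpleGraph.Walk.edges_nil, List.nodup_cons,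
      List.mem_cons, List.not_mem_nil, or_false, List.mem_singleton, List.nodup_nil, and_true,
      not_or, Sym2.eq_iff]
    refine ⟨⟨?_, ?_, ?_⟩, ⟨?_, ?_⟩, ?_, not_false⟩ <;> tauto
  · simp only [SimpleGraph.Walk.support_cons, SimpleGraph.Walk.support_nil, List.tail_cons,
      List.nodup_cons, List.mem_cons, List.not_mem_nil, or_false, List.mem_singleton,
      List.nodup_nil, and_true, not_or]
    exact ⟨⟨n2, nqs, fun h => n1 h.symm⟩, ⟨n3, fun h => npr h.symm⟩, n4, not_false⟩

end Aux

open SimpleGraph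

/-- Any two adjacent 5-faces are normally adjacent: their bounding 5-cycles share
exactly one edge together with its two endpoints. -/
theorem statement10 {V : Type*} [Fintype V] (G : SimpleGraph V) [DecidableRel G.Adj]
    (hconn : G.Connected)
    (E : Paper.PlaneEmbedding G) (hE : E.IsPlane)
    (hmin : ∀ v : V, 3 ≤ G.degree v)
    (h4 : Paper.NoCycleLen G 4) (h7 : Paper.NoCycleLen G 7)
    (h9 : Paper.NoCycleLen G 9) (h53 : Paper.No5CycleNormAdj3 G) :
    ∀ d1 d2 : G.Dart, Paper.faceSize E d1 = 5 → Paper.faceSize E d2 = 5 →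
      ¬ E.facePerm.SameCycle d1 d2 → Paper.FacesAdjacent E d1 d2 →
      ∃ x y : V, x ≠ y ∧ G.Adj x y ∧
        Paper.faceVerts E d1 ∩ Paper.faceVerts E d2 = {x, y} ∧
        s(x, y) ∈ Paper.faceEdges E d1 ∧ s(x, y) ∈ Paper.faceEdges E d2 := by
  classical
  intro d1 d2 hs1 hs2 hnsc hadjf
  have h4' : ∀ (v : V) (w : G.Walk v v), w.IsCycle → w.length ≠ 4 := h4
  obtain ⟨e1, e2, hc1, hc2, hedge⟩ := hadjf
  have hne12 : e1 ≠ e2 := by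
    rintro rfl
    exact hnsc (hc1.trans hc2.symm)
  have he2 : e2 = e1.symm := by
    rcases (SimpleGraph.dart_edge_eq_iff e1 e2).mp hedge with h | h
    · exact absurd h hne12
    · rw [h, SimpleGraph.Dart.symm_symm]
  subst he2
  obtain ⟨a, b, c, hpow1, E1, E2, E3, E4, nd1, orb1⟩ := Aux.face5 E hmin hs1 hc1
  obtain ⟨r, q, p, hpow2, F1, F2, F3, F4, nd2, orb2⟩ := Aux.face5 E hmin hs2 hc2
  set f := E.facePerm with hf
  have hs1f : e1.symm.fst = e1.snd := rfl
  have hs1s : e1.symm.snd = e1.fst := rfl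
  rw [hs1s] at F1
  rw [hs1f] at F4
  rw [hs1f, hs1s] at nd2
  simp only [List.nodup_cons, List.mem_cons, List.not_mem_nil, or_false,
    List.mem_singleton, List.nodup_nil, and_true, not_or] at nd1 nd2
  obtain ⟨⟨nxy, nxa, nxb, nxc⟩, ⟨nya, nyb, nyc⟩, ⟨nab, nac⟩, nbc, -⟩ := nd1
  obtain ⟨⟨nyx, nyr, nyq, nyp⟩, ⟨nxr, nxq, nxp⟩, ⟨nrq, nrp⟩, nqp, -⟩ := nd2
  have v1 : (f e1).fst = e1.snd := by rw [E1]
  have v2 : ((f ^ 2) e1).fst = a := by rw [E2]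
  have v3 : ((f ^ 3) e1).fst = b := by rw [E3]
  have v4 : ((f ^ 4) e1).fst = c := by rw [E4]
  have w1 : (f e1.symm).fst = e1.fst := by rw [F1]
  have w2 : ((f ^ 2) e1.symm).fst = r := by rw [F2]
  have w3 : ((f ^ 3) e1.symm).fst = q := by rw [F3]
  have w4 : ((f ^ 4) e1.symm).fst = p := by rw [F4]
  have axy : G.Adj e1.fst e1.snd := e1.adj
  have aya : G.Adj e1.snd a := by have h := (f e1).adj; rw [E1] at h; exact h
  have aab : G.Adj a b := by have h := ((f ^ 2) e1).adj; rw [E2] at h; exact h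
  have abc : G.Adj b c := by have h := ((f ^ 3) e1).adj; rw [E3] at h; exact h
  have acx : G.Adj c e1.fst := by have h := ((f ^ 4) e1).adj; rw [E4] at h; exact h
  have axr : G.Adj e1.fst r := by have h := (f e1.symm).adj; rw [F1] at h; exact h
  have arq : G.Adj r q := by have h := ((f ^ 2) e1.symm).adj; rw [F2] at h; exact h
  have aqp : G.Adj q p := by have h := ((f ^ 3) e1.symm).adj; rw [F3] at h; exact h
  have apy : G.Adj p e1.snd := by have h := ((f ^ 4) e1.symm).adj; rw [F4] at h; exact h
  have hrot1 : E.rot e1.symm = f e1 := (Aux.facePerm_apply E e1).symm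
  have hrot2 : f e1.symm = E.rot e1 := by
    rw [Aux.facePerm_apply, SimpleGraph.Dart.symm_symm]
  have hstep1 : f ((f ^ 4) e1) = e1 := by
    rw [← Equiv.Perm.mul_apply, ← pow_succ']; exact hpow1
  have hend1 : E.rot (((f ^ 4) e1).symm) = e1 := by
    rw [← Aux.facePerm_apply]; exact hstep1
  have hstep2 : f ((f ^ 4) e1.symm) = e1.symm := by
    rw [← Equiv.Perm.mul_apply, ← pow_succ']; exact hpow2
  have hend2 : E.rot (((f ^ 4) e1.symm).symm) = e1.symm := by
    rw [← Aux.facePerm_apply]; exact hstep2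
  have keyA : a = p → False := by
    intro h
    have hBB : ((f ^ 4) e1.symm).symm = f e1 := by
      apply SimpleGraph.Dart.ext
      rw [SimpleGraph.Dart.symm_toProd, F4, Prod.swap_prod_mk, E1, ← h]
    have h2 : E.rot (f e1) = e1.symm := by rw [← hBB]; exact hend2
    have hfst : e1.symm.fst = (f e1).fst := by rw [v1]; exact hs1f
    have hne : e1.symm ≠ f e1 := by
      intro hh
      have h2' := congrArg (fun g : G.Dart => g.toProd.2) hh
      simp only [E1] at h2'
      exact nxa h2'
    exact Aux.rot_two_cycle E hmin hfst hne hrot1 h2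
  have keyB : c = r → False := by
    intro h
    have hBB : f e1.symm = ((f ^ 4) e1).symm := by
      apply SimpleGraph.Dart.ext
      rw [F1, SimpleGraph.Dart.symm_toProd, E4, Prod.swap_prod_mk, ← h]
    have h1 : E.rot e1 = ((f ^ 4) e1).symm := by rw [← hrot2]; exact hBB
    have hsymm4 : ((f ^ 4) e1).symm.toProd = (e1.fst, c) := by
      rw [SimpleGraph.Dart.symm_toProd, E4, Prod.swap_prod_mk]
    have hfst : e1.fst = ((f ^ 4) e1).symm.fst := by rw [hsymm4]
    have hne : e1 ≠ ((f ^ 4) e1).symm := by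
      intro hh
      have h2' := congrArg (fun g : G.Dart => g.toProd.2) hh
      simp only [hsymm4] at h2'
      exact nyc h2'
    exact Aux.rot_two_cycle E hmin hfst hne h1 hend1
  refine ⟨e1.fst, e1.snd, nxy, axy, ?_, ⟨e1, hc1, rfl⟩,
    ⟨e1.symm, hc2, by rw [SimpleGraph.Dart.edge_symm]; rfl⟩⟩
  ext z
  simp only [Set.mem_inter_iff, Set.mem_insert_iff, Set.mem_singleton_iff,
    Paper.faceVerts, Set.mem_setOf_eq]
  constructor
  · rintro ⟨⟨g1, hg1, rfl⟩, g2, hg2, hg2z⟩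
    have hz1 : g1.fst = e1.fst ∨ g1.fst = e1.snd ∨ g1.fst = a ∨ g1.fst = b ∨ g1.fst = c := by
      rcases orb1 g1 hg1 with rfl | rfl | rfl | rfl | rfl
      · exact Or.inl rfl
      · exact Or.inr (Or.inl v1)
      · exact Or.inr (Or.inr (Or.inl v2))
      · exact Or.inr (Or.inr (Or.inr (Or.inl v3)))
      · exact Or.inr (Or.inr (Or.inr (Or.inr v4)))
    have hz2 : g1.fst = e1.snd ∨ g1.fst = e1.fst ∨ g1.fst = r ∨ g1.fst = q ∨ g1.fst = p := by
      rw [← hg2z]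
      rcases orb2 g2 hg2 with rfl | rfl | rfl | rfl | rfl
      · exact Or.inl rfl
      · exact Or.inr (Or.inl w1)
      · exact Or.inr (Or.inr (Or.inl w2))
      · exact Or.inr (Or.inr (Or.inr (Or.inl w3)))
      · exact Or.inr (Or.inr (Or.inr (Or.inr w4)))
    rcases hz1 with h1 | h1 | h1 | h1 | h1
    · exact Or.inl h1
    · exact Or.inr h1
    · exfalso
      rcases hz2 with h2 | h2 | h2 | h2 | h2
      · exact nya (h1.symm.trans h2).symm
      · exact nxa (h1.symm.trans h2).symm
      · -- a = r : 4-cycle a b c x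
        have har : a = r := h1.symm.trans h2
        have haxa : G.Adj e1.fst a := by rw [har]; exact axr
        obtain ⟨w, hw, hl⟩ := Aux.cycle4 aab abc acx haxa nac (fun hh => nxb hh.symm)
        exact h4' a w hw hl
      · -- a = q : 4-cycle x y a r
        have haq : a = q := h1.symm.trans h2
        have har' : G.Adj a r := by rw [haq]; exact arq.symm
        obtain ⟨w, hw, hl⟩ := Aux.cycle4 axy aya har' axr.symm nxa nyr
        exact h4' e1.fst w hw hl
      · exact keyA (h1.symm.trans h2)
    · exfalso
      rcases hz2 with h2 | h2 | h2 | h2 | h2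
      · exact nyb (h1.symm.trans h2).symm
      · exact nxb (h1.symm.trans h2).symm
      · -- b = r : 4-cycle x y a b
        have hbr : b = r := h1.symm.trans h2
        have hbx : G.Adj b e1.fst := by rw [hbr]; exact axr.symm
        obtain ⟨w, hw, hl⟩ := Aux.cycle4 axy aya aab hbx nxa nyb
        exact h4' e1.fst w hw hl
      · -- b = q
        have hbq : b = q := h1.symm.trans h2
        by_cases hpa : p = a
        · exact keyA hpa.symm
        · have hbp : G.Adj b p := by rw [hbq]; exact aqp
          obtain ⟨w, hw, hl⟩ := Aux.cycle4 aya aab hbp apy nyb (fun hh => hpa hh.symm)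
          exact h4' e1.snd w hw hl
      · -- b = p : 4-cycle x y b c
        have hbp : b = p := h1.symm.trans h2
        have hyb : G.Adj e1.snd b := by rw [hbp]; exact apy.symm
        obtain ⟨w, hw, hl⟩ := Aux.cycle4 axy hyb abc acx nxb nyc
        exact h4' e1.fst w hw hl
    · exfalso
      rcases hz2 with h2 | h2 | h2 | h2 | h2
      · exact nyc (h1.symm.trans h2).symm
      · exact nxc (h1.symm.trans h2).symm
      · exact keyB (h1.symm.trans h2)
      · -- c = q : 4-cycle x y p c
        have hcq : c = q := h1.symm.trans h2
        have hpc : G.Adj p c := by rw [hcq]; exact aqp.symm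
        obtain ⟨w, hw, hl⟩ := Aux.cycle4 axy apy.symm hpc acx nxp nyc
        exact h4' e1.fst w hw hl
      · -- c = p : 4-cycle y a b c
        have hcp : c = p := h1.symm.trans h2
        have hcy : G.Adj c e1.snd := by rw [hcp]; exact apy
        obtain ⟨w, hw, hl⟩ := Aux.cycle4 aya aab abc hcy nyb nac
        exact h4' e1.snd w hw hl
  · rintro (rfl | rfl)
    · exact ⟨⟨e1, hc1, rfl⟩, ⟨f e1.symm, hc2.trans ⟨1, by simp⟩, w1⟩⟩
    · exact ⟨⟨f e1, hc1.trans ⟨1, by simp⟩, v1⟩, ⟨e1.symm, hc2, rfl⟩⟩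
end

section
/- Let G be a connected plane graph with minimum degree at least 3 that contains no cycle of length 4, no cycle of length 7, no cycle of length 9, and no 5-cycle normally adjacent to a 3-cycle. Then G has no 7-face, i.e., no face of G has boundary walk of length 7. -/
open SimpleGraph

set_option maxHeartbeats 1600000 in
/-- There are no 7-faces. -/
theorem statement12 {V : Type*} [Fintype V] (G : SimpleGraph V) [DecidableRel G.Adj]
    (hconn : G.Connected)
    (E : Paper.PlaneEmbedding G) (hE : E.IsPlane)
    (hmin : ∀ v : V, 3 ≤ G.degree v)
    (h4 : Paper.NoCycleLen G 4) (h7 : Paper.NoCycleLen G 7)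
    (h9 : Paper.NoCycleLen G 9) (h53 : Paper.No5CycleNormAdj3 G) :
    ∀ d0 : G.Dart, Paper.faceSize E d0 ≠ 7 := by
  
  classical
  intro d0 hface
  set P := E.facePerm with hP
  have hPapp : ∀ d : G.Dart, P d = E.rot d.symm := fun d => rfl
  have hPfst : ∀ d : G.Dart, (P d).fst = d.snd := by
    intro d; rw [hPapp, E.fst_rot]; rfl
  -- no backtracking
  have hnb : ∀ d : G.Dart, P d ≠ d.symm := by
    intro d h
    have hrot : E.rot d.symm = d.symm := by rw [← hPapp]; exact h
    have hdeg : 1 < (G.neighborFinset d.snd).card := by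
      have := hmin d.snd
      rw [← SimpleGraph.card_neighborFinset_eq_degree] at this
      omega
    obtain ⟨y, hy, hyne⟩ := Finset.exists_mem_ne hdeg d.fst
    have hadjy : G.Adj d.snd y := (SimpleGraph.mem_neighborFinset _ _ _).1 hy
    obtain ⟨n, hn⟩ := E.rot_cyclic d.symm ⟨(d.snd, y), hadjy⟩ rfl
    rw [Equiv.Perm.zpow_apply_eq_self_of_apply_eq_self hrot] at hn
    exact hyne (congrArg (fun e : G.Dart => e.snd) hn).symm
  -- orbit facts
  have h1 : P d0 ≠ d0 := by
    intro h
    have hs : Paper.faceOf E d0 = {d0} := by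
      ext e
      simp only [Paper.faceOf, Set.mem_setOf_eq, Set.mem_singleton_iff]
      constructor
      · rintro ⟨n, hn⟩
        rw [Equiv.Perm.zpow_apply_eq_self_of_apply_eq_self h] at hn
        exact hn.symm
      · rintro rfl; exact Equiv.Perm.SameCycle.refl _ _
    rw [Paper.faceSize, hs] at hface
    simp at hface
  have hsupp : d0 ∈ P.support := Equiv.Perm.mem_support.2 h1
  have hset : Paper.faceOf E d0 = ↑(P.cycleOf d0).support := by
    ext e
    simp only [Paper.faceOf, Set.mem_setOf_eq, Finset.mem_coe,
      Equiv.Perm.mem_support_cycleOf_iff]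
    exact ⟨fun h => ⟨h, hsupp⟩, fun h => h.1⟩
  have hcard : (P.cycleOf d0).support.card = 7 := by
    rw [Paper.faceSize, hset, Set.ncard_coe_finset] at hface
    exact hface
  have horder : orderOf (P.cycleOf d0) = 7 := by
    rw [(P.isCycle_cycleOf h1).orderOf, hcard]
  have hper : (P ^ 7) d0 = d0 := by
    rw [← P.cycleOf_pow_apply_self d0 7, ← horder, pow_orderOf_eq_one]
    rfl
  -- the boundary walk
  set v : ℕ → V := fun i => ((P ^ i) d0).fst with hv
  have hpowsucc : ∀ i : ℕ, (P ^ (i+1)) d0 = P ((P ^ i) d0) := by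
    intro i; rw [pow_succ', Equiv.Perm.mul_apply]
  have hsnd : ∀ i : ℕ, ((P ^ i) d0).snd = v (i + 1) := by
    intro i
    show _ = ((P ^ (i+1)) d0).fst
    rw [hpowsucc, hPfst]
  have hadj : ∀ i, G.Adj (v i) (v (i + 1)) := by
    intro i
    have h := ((P ^ i) d0).adj
    rwa [hsnd i] at h
  have hperiod : ∀ i, v (i + 7) = v i := by
    intro i
    show ((P ^ (i + 7)) d0).fst = _
    rw [pow_add, Equiv.Perm.mul_apply, hper]
  have hne2 : ∀ i, v (i + 2) ≠ v i := by
    intro i h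
    apply hnb ((P ^ i) d0)
    rw [← hpowsucc]
    apply SimpleGraph.Dart.ext
    apply Prod.ext
    · show ((P ^ (i+1)) d0).fst = ((P ^ i) d0).snd
      rw [hpowsucc, hPfst]
    · show ((P ^ (i+1)) d0).snd = ((P ^ i) d0).fst
      rw [hsnd (i+1)]
      exact h
  by_cases hsplit : ∃ i, v i = v (i + 3)
  · -- 4-cycle
    obtain ⟨i, hi⟩ := hsplit
    have a01 : G.Adj (v (i+3)) (v (i+4)) := hadj (i+3)
    have a12 : G.Adj (v (i+4)) (v (i+5)) := hadj (i+4)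
    have a23 : G.Adj (v (i+5)) (v (i+6)) := hadj (i+5)
    have a30 : G.Adj (v (i+6)) (v (i+3)) := by
      have h := hadj (i+6)
      rwa [show i+6+1 = i+7 from rfl, hperiod, hi] at h
    have n02 : v (i+3) ≠ v (i+5) := (hne2 (i+3)).symm
    have n02' : v (i+5) ≠ v (i+3) := n02.symm
    have n13 : v (i+4) ≠ v (i+6) := (hne2 (i+4)).symm
    have n13' : v (i+6) ≠ v (i+4) := n13.symm
    have m01 : v (i+3) ≠ v (i+4) := a01.ne
    have m01' : v (i+4) ≠ v (i+3) := a01.ne.symm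
    have m12 : v (i+4) ≠ v (i+5) := a12.ne
    have m12' : v (i+5) ≠ v (i+4) := a12.ne.symm
    have m23 : v (i+5) ≠ v (i+6) := a23.ne
    have m23' : v (i+6) ≠ v (i+5) := a23.ne.symm
    have m30 : v (i+6) ≠ v (i+3) := a30.ne
    have m30' : v (i+3) ≠ v (i+6) := a30.ne.symm
    let w : G.Walk (v (i+3)) (v (i+3)) :=
      Walk.cons a01 (Walk.cons a12 (Walk.cons a23 (Walk.cons a30 Walk.nil)))
    refine h4 _ w ?_ rfl
    rw [Walk.cons_isCycle_iff]
    refine ⟨?_, ?_⟩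
    · simp only [Walk.cons_isPath_iff, Walk.isPath_iff_eq_nil, Walk.support_cons,
        Walk.support_nil, List.mem_cons, List.mem_singleton, List.not_mem_nil]
      push_neg
      tauto
    · simp only [Walk.edges_cons, Walk.edges_nil, List.mem_cons, List.not_mem_nil,
        or_false, Sym2.eq_iff]
      push_neg
      tauto
  · -- 7-cycle
    push_neg at hsplit
    have h3 : ∀ i, v i ≠ v (i + 3) := hsplit
    have n01 : v 0 ≠ v 1 := (hadj 0).ne
    have n12 : v 1 ≠ v 2 := (hadj 1).ne
    have n23 : v 2 ≠ v 3 := (hadj 2).ne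
    have n34 : v 3 ≠ v 4 := (hadj 3).ne
    have n45 : v 4 ≠ v 5 := (hadj 4).ne
    have n56 : v 5 ≠ v 6 := (hadj 5).ne
    have n02 : v 0 ≠ v 2 := (hne2 0).symm
    have n13 : v 1 ≠ v 3 := (hne2 1).symm
    have n24 : v 2 ≠ v 4 := (hne2 2).symm
    have n35 : v 3 ≠ v 5 := (hne2 3).symm
    have n46 : v 4 ≠ v 6 := (hne2 4).symm
    have n03 : v 0 ≠ v 3 := h3 0
    have n14 : v 1 ≠ v 4 := h3 1
    have n25 : v 2 ≠ v 5 := h3 2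
    have n36 : v 3 ≠ v 6 := h3 3
    have hv7 : v 7 = v 0 := hperiod 0
    have hv8 : v 8 = v 1 := hperiod 1
    have hv9 : v 9 = v 2 := hperiod 2
    have n04 : v 0 ≠ v 4 := fun h => h3 4 (hv7.symm ▸ h.symm ▸ rfl)
    have n05 : v 0 ≠ v 5 := fun h => hne2 5 (by rw [show (5:ℕ)+2 = 7 from rfl, hv7, ← h])
    have n06 : v 0 ≠ v 6 := fun h => (hadj 6).ne (by rw [show (6:ℕ)+1 = 7 from rfl, hv7, ← h])
    have n15 : v 1 ≠ v 5 := fun h => h3 5 (by rw [show (5:ℕ)+3 = 8 from rfl, hv8, ← h])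
    have n16 : v 1 ≠ v 6 := fun h => hne2 6 (by rw [show (6:ℕ)+2 = 8 from rfl, hv8, ← h])
    have n26 : v 2 ≠ v 6 := fun h => h3 6 (by rw [show (6:ℕ)+3 = 9 from rfl, hv9, ← h])
    have q01 := n01.symm; have q12 := n12.symm; have q23 := n23.symm
    have q34 := n34.symm; have q45 := n45.symm; have q56 := n56.symm
    have q02 := n02.symm; have q13 := n13.symm; have q24 := n24.symm
    have q35 := n35.symm; have q46 := n46.symm
    have q03 := n03.symm; have q14 := n14.symm; have q25 := n25.symm; have q36 := n36.symm
    have q04 := n04.symm; have q05 := n05.symm; have q06 := n06.symm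
    have q15 := n15.symm; have q16 := n16.symm; have q26 := n26.symm
    have a01 : G.Adj (v 0) (v 1) := hadj 0
    have a12 : G.Adj (v 1) (v 2) := hadj 1
    have a23 : G.Adj (v 2) (v 3) := hadj 2
    have a34 : G.Adj (v 3) (v 4) := hadj 3
    have a45 : G.Adj (v 4) (v 5) := hadj 4
    have a56 : G.Adj (v 5) (v 6) := hadj 5
    have a60 : G.Adj (v 6) (v 0) := by
      have h := hadj 6
      rwa [show (6:ℕ)+1 = 7 from rfl, hv7] at h
    let w : G.Walk (v 0) (v 0) :=
      Walk.cons a01 (Walk.cons a12 (Walk.cons a23 (Walk.cons a34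
        (Walk.cons a45 (Walk.cons a56 (Walk.cons a60 Walk.nil))))))
    refine h7 _ w ?_ rfl
    rw [Walk.cons_isCycle_iff]
    refine ⟨?_, ?_⟩
    · simp only [Walk.cons_isPath_iff, Walk.isPath_iff_eq_nil, Walk.support_cons,
        Walk.support_nil, List.mem_cons, List.mem_singleton, List.not_mem_nil]
      push_neg
      tauto
    · simp only [Walk.edges_cons, Walk.edges_nil, List.mem_cons, List.not_mem_nil,
        or_false, Sym2.eq_iff]
      push_neg
      tauto
end

section
/- Let G be a connected plane graph with minimum degree at least 3 that contains no cycle of length 4, no cycle of length 7, no cycle of length 9, and no 5-cycle normally adjacent to a 3-cycle. Then the boundary walk of every 8-face of G consists either of a single 8-cycle, or of two 3-cycles together with a cut edge traversed twice, or of one 3-cycle and one 5-cycle (meeting at a cut vertex). -/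
open SimpleGraph


section Helpers
variable {V : Type*}

private lemma rot_ne_self [Fintype V] {G : SimpleGraph V} [DecidableRel G.Adj]
    (E : Paper.PlaneEmbedding G) (hmin : ∀ v : V, 3 ≤ G.degree v) (d : G.Dart) :
    E.rot d ≠ d := by
  intro hfix
  have hcard : 1 < (G.neighborFinset d.fst).card := by
    have h := hmin d.fst
    rw [← SimpleGraph.card_neighborFinset_eq_degree] at h
    omega
  obtain ⟨b, hb, hbne⟩ := Finset.exists_mem_ne hcard d.snd
  have hbadj : G.Adj d.fst b := by rwa [SimpleGraph.mem_neighborFinset] at hb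
  obtain ⟨n, hn⟩ := E.rot_cyclic d ⟨(d.fst, b), hbadj⟩ rfl
  rw [Equiv.Perm.zpow_apply_eq_self_of_apply_eq_self hfix n] at hn
  exact hbne (congrArg (fun x => x.toProd.2) hn).symm

private lemma four_cycle_aux {G : SimpleGraph V} {a b c d : V}
    (hab : G.Adj a b) (hbc : G.Adj b c) (hcd : G.Adj c d) (hda : G.Adj d a)
    (hac : a ≠ c) (hbd : b ≠ d) (h4 : Paper.NoCycleLen G 4) : False := by
  refine h4 a (.cons hab (.cons hbc (.cons hcd (.cons hda .nil)))) ?_ (by simp)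
  have h1 := hab.ne; have h2 := hbc.ne; have h3 := hcd.ne; have h5 := hda.ne
  rw [SimpleGraph.Walk.isCycle_def]
  refine ⟨?_, by simp, ?_⟩
  · rw [SimpleGraph.Walk.isTrail_def]
    simp [Sym2.eq_iff]
    tauto
  · simp
    tauto

private lemma orbit_facts {α : Type*} [Finite α] (f : Equiv.Perm α) (x : α)
    (h : {y | f.SameCycle x y}.ncard = 8) :
    (f ^ 8) x = x ∧ ∀ i j : ℕ, i < 8 → j < 8 → (f ^ i) x = (f ^ j) x → i = j := by
  classical
  cases nonempty_fintype α
  have hper : x ∈ Function.periodicPts ⇑f := ⟨orderOf f, orderOf_pos f, by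
    simp [Function.IsPeriodicPt, Function.IsFixedPt, Equiv.Perm.iterate_eq_pow,
      pow_orderOf_eq_one]⟩
  have hmpos : 0 < Function.minimalPeriod ⇑f x :=
    Function.minimalPeriod_pos_of_mem_periodicPts hper
  have hinj : Set.InjOn (fun i : ℕ => (f ^ i) x) (Set.Iio (Function.minimalPeriod ⇑f x)) := by
    have := Function.iterate_injOn_Iio_minimalPeriod (f := ⇑f) (x := x)
    simpa [Equiv.Perm.iterate_eq_pow] using this
  have hset : {y | f.SameCycle x y}
      = (fun i : ℕ => (f ^ i) x) '' Set.Iio (Function.minimalPeriod ⇑f x) := by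
    ext y; constructor
    · rintro hy
      obtain ⟨i, -, rfl⟩ := hy.exists_pow_eq'
      refine ⟨i % Function.minimalPeriod ⇑f x, Nat.mod_lt _ hmpos, ?_⟩
      have := Function.iterate_mod_minimalPeriod_eq (f := ⇑f) (x := x) (n := i)
      exact this
    · rintro ⟨i, -, rfl⟩
      exact ⟨(i : ℤ), by simp [zpow_natCast]⟩
  have hm : Function.minimalPeriod ⇑f x = 8 := by
    rw [hset, Set.ncard_image_of_injOn hinj, ← Finset.coe_Iio, Set.ncard_coe_finset,
      Nat.card_Iio] at h
    exact h
  constructor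
  · have := Function.iterate_minimalPeriod (f := ⇑f) (x := x)
    rw [hm, Equiv.Perm.iterate_eq_pow] at this
    exact this
  · intro i j hi hj hij
    exact hinj (by rw [hm]; exact hi) (by rw [hm]; exact hj) hij

end Helpers

/-- The boundary walk of every 8-face consists of a single 8-cycle, or of two
3-cycles together with a cut edge traversed twice, or of a 3-cycle and a 5-cycle meeting
at a vertex. -/
theorem statement13 {V : Type*} [Fintype V] (G : SimpleGraph V) [DecidableRel G.Adj]
    (hconn : G.Connected)
    (E : Paper.PlaneEmbedding G) (hE : E.IsPlane)
    (hmin : ∀ v : V, 3 ≤ G.degree v)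
    (h4 : Paper.NoCycleLen G 4) (h7 : Paper.NoCycleLen G 7)
    (h9 : Paper.NoCycleLen G 9) (h53 : Paper.No5CycleNormAdj3 G) :
    ∀ d0 : G.Dart, Paper.faceSize E d0 = 8 →
      (Function.Injective fun i : Fin 8 => Paper.boundaryVert E d0 i) ∨
      (∃ k : ℕ, Paper.boundaryVert E d0 k = Paper.boundaryVert E d0 (k + 3) ∧
        Paper.boundaryVert E d0 (k + 4) = Paper.boundaryVert E d0 (k + 7) ∧
        [Paper.boundaryVert E d0 k, Paper.boundaryVert E d0 (k + 1),
         Paper.boundaryVert E d0 (k + 2), Paper.boundaryVert E d0 (k + 4),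
         Paper.boundaryVert E d0 (k + 5), Paper.boundaryVert E d0 (k + 6)].Nodup) ∨
      (∃ k : ℕ, Paper.boundaryVert E d0 k = Paper.boundaryVert E d0 (k + 3) ∧
        [Paper.boundaryVert E d0 k, Paper.boundaryVert E d0 (k + 1),
         Paper.boundaryVert E d0 (k + 2), Paper.boundaryVert E d0 (k + 4),
         Paper.boundaryVert E d0 (k + 5), Paper.boundaryVert E d0 (k + 6),
         Paper.boundaryVert E d0 (k + 7)].Nodup) := by
  intro d0 h8
  classical
  obtain ⟨hper, hinj⟩ := orbit_facts E.facePerm d0 h8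
  set v : ℕ → V := Paper.boundaryVert E d0 with hvdef
  have hfst : ∀ d : G.Dart, (E.facePerm d).fst = d.snd := by
    intro d
    have h : E.facePerm d = E.rot d.symm := rfl
    rw [h, E.fst_rot]
    rfl
  have hstep : ∀ i : ℕ, (E.facePerm ^ (i+1)) d0 = E.facePerm ((E.facePerm ^ i) d0) := by
    intro i
    rw [pow_succ']
    rfl
  have hsnd : ∀ i : ℕ, ((E.facePerm ^ i) d0).snd = v (i+1) := by
    intro i
    show _ = ((E.facePerm ^ (i+1)) d0).fst
    rw [hstep, hfst]
  have hadj : ∀ i : ℕ, G.Adj (v i) (v (i+1)) := by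
    intro i
    have h := ((E.facePerm ^ i) d0).adj
    rw [hsnd i] at h
    exact h
  have hne1 : ∀ i : ℕ, v i ≠ v (i+1) := fun i => (hadj i).ne
  have hvp : ∀ i : ℕ, v (i+8) = v i := by
    intro i
    show ((E.facePerm ^ (i+8)) d0).fst = ((E.facePerm ^ i) d0).fst
    rw [pow_add, Equiv.Perm.mul_apply, hper]
  have hD : ∀ i : ℕ, (E.facePerm ^ i) d0 = (E.facePerm ^ (i % 8)) d0 := by
    intro i
    conv_lhs => rw [← Nat.mod_add_div i 8]
    rw [pow_add, Equiv.Perm.mul_apply]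
    congr 1
    induction (i / 8) with
    | zero => simp
    | succ q ih =>
        rw [Nat.mul_succ, pow_add, Equiv.Perm.mul_apply, hper, ih]
  have hmodinj : ∀ i j : ℕ, v i = v j → v (i+1) = v (j+1) → i % 8 = j % 8 := by
    intro i j h1 h2
    have hde : (E.facePerm ^ i) d0 = (E.facePerm ^ j) d0 := by
      apply SimpleGraph.Dart.ext
      apply Prod.ext
      · exact h1
      · show ((E.facePerm ^ i) d0).snd = ((E.facePerm ^ j) d0).snd
        rw [hsnd i, hsnd j]
        exact h2
    rw [hD i, hD j] at hde
    exact hinj _ _ (Nat.mod_lt _ (by norm_num)) (Nat.mod_lt _ (by norm_num)) hde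
  have hnobt : ∀ d : G.Dart, E.facePerm d ≠ d.symm := by
    intro d h
    exact rot_ne_self E hmin d.symm h
  have hne2 : ∀ i : ℕ, v i ≠ v (i+2) := by
    intro i h
    apply hnobt ((E.facePerm ^ i) d0)
    rw [← hstep i]
    apply SimpleGraph.Dart.ext
    apply Prod.ext
    · show ((E.facePerm ^ (i+1)) d0).fst = ((E.facePerm ^ i) d0).snd
      rw [hsnd i]
      rfl
    · show ((E.facePerm ^ (i+1)) d0).snd = ((E.facePerm ^ i) d0).fst
      rw [hsnd (i+1)]
      show v (i+2) = v i
      exact h.symm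
  have hne4 : ∀ i : ℕ, v i ≠ v (i+4) := by
    intro i h
    refine four_cycle_aux (hadj i) (hadj (i+1)) (hadj (i+2)) ?_ (hne2 i) (hne2 (i+1)) h4
    have hh := hadj (i+3)
    rw [show i+3+1 = i+4 from by omega, ← h] at hh
    exact hh
  have hS1 : ∀ i : ℕ, v i = v (i+3) → v (i+1) = v (i+4) → False := by
    intro i h1 h2
    have hm := hmodinj i (i+3) h1 (by rw [show i+3+1 = i+4 from by omega]; exact h2)
    omega
  have hS2 : ∀ i : ℕ, v i = v (i+3) → v (i+2) = v (i+5) → False := by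
    intro i h1 h2
    refine four_cycle_aux (hadj i) (hadj (i+1)) ?_ ?_ (hne2 i) (fun hbd => hS1 i h1 hbd) h4
    · have hh := hadj (i+4)
      rw [show i+4+1 = i+5 from by omega, ← h2] at hh
      exact hh.symm
    · have hh := hadj (i+3)
      rw [show i+3+1 = i+4 from by omega, ← h1] at hh
      exact hh.symm
  by_cases hScase : ∃ k : ℕ, v k = v (k+3)
  · obtain ⟨k, hk⟩ := hScase
    by_cases hcut : v (k+4) = v (k+7)
    · refine Or.inr (Or.inl ⟨k, hk, hcut, ?_⟩)
      simp only [List.nodup_cons, List.mem_cons, List.mem_singleton, List.not_mem_nil,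
        or_false, not_or, List.nodup_nil, and_true]
      refine ⟨⟨?_, ?_, ?_, ?_, ?_⟩, ⟨?_, ?_, ?_, ?_⟩, ⟨?_, ?_, ?_⟩, ⟨?_, ?_⟩, ?_⟩
      · exact hne1 k
      · exact hne2 k
      · exact hne4 k
      · intro h
        exact hS1 (k+4) hcut (by
          rw [show k+4+1 = k+5 from by omega, show k+4+4 = k+8 from by omega, hvp]
          exact h.symm)
      · intro h
        exact hne2 (k+6) (by rw [show k+6+2 = k+8 from by omega, hvp]; exact h.symm)
      · exact hne1 (k+1)
      · exact fun h => hS1 k hk h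
      · exact fun h => hne4 (k+1) (by rw [show k+1+4 = k+5 from by omega]; exact h)
      · intro h
        exact hS2 (k+4) hcut (by
          rw [show k+4+2 = k+6 from by omega, show k+4+5 = (k+1)+8 from by omega, hvp]
          exact h.symm)
      · exact fun h => hne2 (k+2) (by rw [show k+2+2 = k+4 from by omega]; exact h)
      · exact fun h => hS2 k hk h
      · exact fun h => hne4 (k+2) (by rw [show k+2+4 = k+6 from by omega]; exact h)
      · exact hne1 (k+4)
      · exact fun h => hne2 (k+4) (by rw [show k+4+2 = k+6 from by omega]; exact h)
      · exact ⟨hne1 (k+5), id⟩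
    · refine Or.inr (Or.inr ⟨k, hk, ?_⟩)
      simp only [List.nodup_cons, List.mem_cons, List.mem_singleton, List.not_mem_nil,
        or_false, not_or, List.nodup_nil, and_true]
      refine ⟨⟨?_, ?_, ?_, ?_, ?_, ?_⟩, ⟨?_, ?_, ?_, ?_, ?_⟩, ⟨?_, ?_, ?_, ?_⟩,
        ⟨?_, ?_, ?_⟩, ⟨?_, ?_⟩, ?_⟩
      · exact hne1 k
      · exact hne2 k
      · exact hne4 k
      · intro h
        exact hne2 (k+3) (by rw [show k+3+2 = k+5 from by omega]; exact hk.symm.trans h)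
      · intro h
        exact hne2 (k+6) (by rw [show k+6+2 = k+8 from by omega, hvp]; exact h.symm)
      · intro h
        exact hne1 (k+7) (by rw [show k+7+1 = k+8 from by omega, hvp]; exact h.symm)
      · exact hne1 (k+1)
      · exact fun h => hS1 k hk h
      · exact fun h => hne4 (k+1) (by rw [show k+1+4 = k+5 from by omega]; exact h)
      · intro h
        exact hS2 (k+6)
          (by rw [show k+6+3 = (k+1)+8 from by omega, hvp]; exact h.symm)
          (by rw [show k+6+2 = k+8 from by omega, show k+6+5 = (k+3)+8 from by omega,
                hvp, hvp]; exact hk)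
      · intro h
        exact hne2 (k+7) (by rw [show k+7+2 = (k+1)+8 from by omega, hvp]; exact h.symm)
      · exact fun h => hne2 (k+2) (by rw [show k+2+2 = k+4 from by omega]; exact h)
      · exact fun h => hS2 k hk h
      · exact fun h => hne4 (k+2) (by rw [show k+2+4 = k+6 from by omega]; exact h)
      · intro h
        exact hS1 (k+7)
          (by rw [show k+7+3 = (k+2)+8 from by omega, hvp]; exact h.symm)
          (by rw [show k+7+1 = k+8 from by omega, show k+7+4 = (k+3)+8 from by omega,
                hvp, hvp]; exact hk)
      · exact hne1 (k+4)
      · exact fun h => hne2 (k+4) (by rw [show k+4+2 = k+6 from by omega]; exact h)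
      · exact hcut
      · exact hne1 (k+5)
      · exact fun h => hne2 (k+5) (by rw [show k+5+2 = k+7 from by omega]; exact h)
      · exact ⟨hne1 (k+6), id⟩
  · push_neg at hScase
    refine Or.inl ?_
    have key : ∀ a t : ℕ, 1 ≤ t → t ≤ 7 → v a ≠ v (a + t) := by
      intro a t h1t ht7 h
      interval_cases t
      · exact hne1 a h
      · exact hne2 a h
      · exact hScase a h
      · exact hne4 a h
      · exact hScase (a+5) (by rw [show a+5+3 = a+8 from by omega, hvp]; exact h.symm)
      · exact hne2 (a+6) (by rw [show a+6+2 = a+8 from by omega, hvp]; exact h.symm)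
      · exact hne1 (a+7) (by rw [show a+7+1 = a+8 from by omega, hvp]; exact h.symm)
    intro i j hij
    have hij' : v (i : ℕ) = v (j : ℕ) := hij
    by_contra hne
    have hnev : (i : ℕ) ≠ (j : ℕ) := fun hc => hne (Fin.ext hc)
    rcases Nat.lt_or_ge (i : ℕ) (j : ℕ) with hlt | hge
    · exact key i ((j : ℕ) - (i : ℕ)) (by omega) (by omega)
        (by rw [show (i : ℕ) + ((j : ℕ) - (i : ℕ)) = (j : ℕ) from by omega]; exact hij')
    · have hlt : (j : ℕ) < (i : ℕ) := by omega
      exact key j ((i : ℕ) - (j : ℕ)) (by omega) (by omega)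
        (by rw [show (j : ℕ) + ((i : ℕ) - (j : ℕ)) = (i : ℕ) from by omega]; exact hij'.symm)
end
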